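/- arXiv:2008.04123 — 14 statements merged into one kernel-verified Lean document; each statement's English description precedes it below -/
import Mathlib

section
/- Let G be a finite non-abelian group, H a subgroup of G, and g ∈ G. If g ∉ K(H,G), then in the relative g-noncommuting graph Γ^g_{H,G} every vertex x ∈ H has degree |G| − 1, and every vertex x ∈ G \ H has degree |H|. -/
/-- The relative `g`-noncommuting graph of a group `G` with respect to a subgroup `H`:
vertices are the elements of `G`, and distinct `x`, `y` are adjacent iff
(`x ∈ H` or `y ∈ H`) and the commutator `x⁻¹ * y⁻¹ * x * y` is neither `g` nor `g⁻¹`. -/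
def relGraph {G : Type*} [Group G] (H : Subgroup G) (g : G) : SimpleGraph G where
  Adj x y := x ≠ y ∧ (x ∈ H ∨ y ∈ H) ∧ x⁻¹ * y⁻¹ * x * y ≠ g ∧ x⁻¹ * y⁻¹ * x * y ≠ g⁻¹
  symm := by
    constructor
    rintro x y ⟨hxy, hmem, h1, h2⟩
    have key : (x⁻¹ * y⁻¹ * x * y)⁻¹ = y⁻¹ * x⁻¹ * y * x := by group
    refine ⟨hxy.symm, hmem.symm, fun h => h2 ?_, fun h => h1 ?_⟩
    · rw [← inv_inv (x⁻¹ * y⁻¹ * x * y), key, h]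
    · rw [← inv_inv (x⁻¹ * y⁻¹ * x * y), key, h, inv_inv]
  loopless := ⟨fun x h => h.1 rfl⟩

theorem stmt0 {G : Type*} [Group G] [Fintype G]
    (hG : ¬ ∀ a b : G, a * b = b * a)
    (H : Subgroup G) (g : G)
    (hg : g ∉ {u : G | ∃ x ∈ H, ∃ y : G, x⁻¹ * y⁻¹ * x * y = u}) :
    (∀ x ∈ H, ((relGraph H g).neighborSet x).ncard = Nat.card G - 1) ∧
    (∀ x : G, x ∉ H → ((relGraph H g).neighborSet x).ncard = Nat.card H) := by
  simp only [Set.mem_setOf_eq, not_exists] at hg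
  push_neg at hg
  -- master lemma: if x ∈ H or y ∈ H then the commutator avoids g and g⁻¹
  have key : ∀ x y : G, (x ∈ H ∨ y ∈ H) →
      x⁻¹ * y⁻¹ * x * y ≠ g ∧ x⁻¹ * y⁻¹ * x * y ≠ g⁻¹ := by
    rintro x y (hx | hy)
    · refine ⟨fun h => hg x hx y h, fun h => ?_⟩
      have hx' : x⁻¹ ∈ H := H.inv_mem hx
      apply hg x⁻¹ hx' (y * x)
      have : x⁻¹⁻¹ * (y * x)⁻¹ * x⁻¹ * (y * x) = (x⁻¹ * y⁻¹ * x * y)⁻¹ := by group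
      rw [this, h, inv_inv]
    · constructor
      · intro h
        apply hg y⁻¹ (H.inv_mem hy) (x * y)
        have : y⁻¹⁻¹ * (x * y)⁻¹ * y⁻¹ * (x * y) = x⁻¹ * y⁻¹ * x * y := by group
        rw [this, h]
      · intro h
        apply hg y hy x
        have : y⁻¹ * x⁻¹ * y * x = (x⁻¹ * y⁻¹ * x * y)⁻¹ := by group
        rw [this, h, inv_inv]
  constructor
  · intro x hx
    have : (relGraph H g).neighborSet x = Set.univ \ {x} := by
      ext y
      simp only [SimpleGraph.mem_neighborSet, relGraph, Set.mem_diff, Set.mem_univ,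
        Set.mem_singleton_iff, true_and]
      constructor
      · rintro ⟨hne, _, _⟩; exact fun h => hne h.symm
      · intro hne
        exact ⟨fun h => hne h.symm, Or.inl hx, key x y (Or.inl hx)⟩
    rw [this, Set.ncard_diff_singleton_of_mem (Set.mem_univ x), Set.ncard_univ]
  · intro x hx
    have : (relGraph H g).neighborSet x = (H : Set G) := by
      ext y
      simp only [SimpleGraph.mem_neighborSet, relGraph, SetLike.mem_coe]
      constructor
      · rintro ⟨_, hmem, _⟩
        rcases hmem with h | h
        · exact absurd h hx
        · exact h
      · intro hy
        refine ⟨fun h => hx (h ▸ hy), Or.inr hy, key x y (Or.inr hy)⟩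
    rw [this, ← Nat.card_coe_set_eq]
    rfl
end

section
/- Let G be a finite non-abelian group, H a subgroup of G, and g ∈ G with g ≠ 1 and g² ≠ 1. Let x ∈ H be a vertex of the relative g-noncommuting graph Γ^g_{H,G}. If exactly one of xg and xg⁻¹ is conjugate to x in G, then the degree of x equals |G| − |C_G(x)| − 1; if both xg and xg⁻¹ are conjugate to x in G, then the degree of x equals |G| − 2|C_G(x)| − 1. -/
lemma card_sol {G : Type*} [Group G] [Fintype G] {x a y₀ : G}
    (h : y₀⁻¹ * x * y₀ = x * a) :
    {y : G | y⁻¹ * x * y = x * a}.ncard = Nat.card (Subgroup.centralizer ({x} : Set G)) := by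
  have hset : {y : G | y⁻¹ * x * y = x * a}
      = (· * y₀) '' ((Subgroup.centralizer ({x} : Set G)) : Set G) := by
    ext y
    simp only [Set.mem_setOf_eq, Set.mem_image, SetLike.mem_coe,
      Subgroup.mem_centralizer_iff, Set.mem_singleton_iff, forall_eq]
    constructor
    · intro hy
      refine ⟨y * y₀⁻¹, ?_, by group⟩
      calc x * (y * y₀⁻¹) = y * (y⁻¹ * x * y) * y₀⁻¹ := by group
        _ = y * (x * a) * y₀⁻¹ := by rw [hy]
        _ = y * (y₀⁻¹ * x * y₀) * y₀⁻¹ := by rw [h]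
        _ = (y * y₀⁻¹) * x := by group
    · rintro ⟨c, hc, rfl⟩
      calc (c * y₀)⁻¹ * x * (c * y₀) = y₀⁻¹ * (c⁻¹ * (x * c)) * y₀ := by group
        _ = y₀⁻¹ * (c⁻¹ * (c * x)) * y₀ := by rw [hc]
        _ = y₀⁻¹ * x * y₀ := by group
        _ = x * a := h
  rw [hset, Set.ncard_image_of_injective _ (mul_left_injective y₀),
    ← Nat.card_coe_set_eq]
  rfl

theorem stmt2 {G : Type*} [Group G] [Fintype G]
    (hG : ¬ ∀ a b : G, a * b = b * a)
    (H : Subgroup G) (g : G) (hg1 : g ≠ 1) (hg2 : g ^ 2 ≠ 1)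
    (x : G) (hx : x ∈ H) :
    (((∃ y : G, y⁻¹ * x * y = x * g) ∧ ¬ (∃ y : G, y⁻¹ * x * y = x * g⁻¹)) ∨
     ((¬ ∃ y : G, y⁻¹ * x * y = x * g) ∧ (∃ y : G, y⁻¹ * x * y = x * g⁻¹)) →
       (((relGraph H g).neighborSet x).ncard : ℤ)
         = (Nat.card G : ℤ) - (Nat.card (Subgroup.centralizer ({x} : Set G)) : ℤ) - 1) ∧
    ((∃ y : G, y⁻¹ * x * y = x * g) ∧ (∃ y : G, y⁻¹ * x * y = x * g⁻¹) →
       (((relGraph H g).neighborSet x).ncard : ℤ)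
         = (Nat.card G : ℤ) - 2 * (Nat.card (Subgroup.centralizer ({x} : Set G)) : ℤ) - 1) := by
  set S1 : Set G := {y : G | y⁻¹ * x * y = x * g} with hS1
  set S2 : Set G := {y : G | y⁻¹ * x * y = x * g⁻¹} with hS2
  -- the neighbor set is the complement of {x} ∪ S1 ∪ S2
  have hN : (relGraph H g).neighborSet x = ({x} ∪ S1 ∪ S2)ᶜ := by
    ext y
    simp only [SimpleGraph.mem_neighborSet, relGraph, Set.mem_compl_iff, Set.mem_union,
      Set.mem_singleton_iff, hS1, hS2, Set.mem_setOf_eq, not_or]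
    have e1 : x⁻¹ * y⁻¹ * x * y = g ↔ y⁻¹ * x * y = x * g := by
      constructor
      · intro h; rw [← h]; group
      · intro h
        calc x⁻¹ * y⁻¹ * x * y = x⁻¹ * (y⁻¹ * x * y) := by group
          _ = x⁻¹ * (x * g) := by rw [h]
          _ = g := by group
    have e2 : x⁻¹ * y⁻¹ * x * y = g⁻¹ ↔ y⁻¹ * x * y = x * g⁻¹ := by
      constructor
      · intro h; rw [← h]; group
      · intro h
        calc x⁻¹ * y⁻¹ * x * y = x⁻¹ * (y⁻¹ * x * y) := by group
          _ = x⁻¹ * (x * g⁻¹) := by rw [h]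
          _ = g⁻¹ := by group
    constructor
    · rintro ⟨hne, _, h1, h2⟩
      exact ⟨⟨fun h => hne h.symm, fun h => h1 (e1.mpr h)⟩, fun h => h2 (e2.mpr h)⟩
    · rintro ⟨⟨hne, h1⟩, h2⟩
      exact ⟨fun h => hne h.symm, Or.inl hx, fun h => h1 (e1.mp h), fun h => h2 (e2.mp h)⟩
  have hx1 : x ∉ S1 := by
    intro h
    simp only [hS1, Set.mem_setOf_eq] at h
    have hxg : x = x * g := by rw [← h]; group
    exact hg1 (mul_left_cancel (a := x) (by rw [mul_one, ← hxg])).symm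
  have hx2 : x ∉ S2 := by
    intro h
    simp only [hS2, Set.mem_setOf_eq] at h
    have hxg : x = x * g⁻¹ := by rw [← h]; group
    have h1 : (1 : G) = g⁻¹ := mul_left_cancel (a := x) (by rw [mul_one, ← hxg])
    exact hg1 (inv_eq_one.mp h1.symm)
  have h12 : Disjoint S1 S2 := by
    rw [Set.disjoint_left]
    intro y hy1 hy2
    simp only [hS1, hS2, Set.mem_setOf_eq] at hy1 hy2
    apply hg2
    have hgg : g = g⁻¹ := mul_left_cancel (a := x) (hy1 ▸ hy2 ▸ rfl)
    rw [pow_two]; nth_rewrite 2 [hgg]; exact mul_inv_cancel g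
  have hdisj : Disjoint ({x} : Set G) (S1 ∪ S2) := by
    rw [Set.disjoint_left]
    rintro y rfl
    simp [hx1, hx2]
  -- cardinality of the complement
  have hcompl : (({x} ∪ S1 ∪ S2 : Set G)ᶜ).ncard
      = Nat.card G - (1 + S1.ncard + S2.ncard) := by
    have h1 : ({x} ∪ S1 ∪ S2 : Set G).ncard = 1 + S1.ncard + S2.ncard := by
      rw [Set.union_assoc, Set.ncard_union_eq hdisj (Set.toFinite _) (Set.toFinite _),
        Set.ncard_union_eq h12 (Set.toFinite _) (Set.toFinite _), Set.ncard_singleton, add_assoc]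
    have h2 := Set.ncard_add_ncard_compl ({x} ∪ S1 ∪ S2 : Set G)
    omega
  have hle : ({x} ∪ S1 ∪ S2 : Set G).ncard ≤ Nat.card G := by
    have := Set.ncard_le_ncard (Set.subset_univ ({x} ∪ S1 ∪ S2 : Set G)) (Set.toFinite _)
    rwa [Set.ncard_univ] at this
  have hsum : ({x} ∪ S1 ∪ S2 : Set G).ncard = 1 + S1.ncard + S2.ncard := by
    rw [Set.union_assoc, Set.ncard_union_eq hdisj (Set.toFinite _) (Set.toFinite _),
      Set.ncard_union_eq h12 (Set.toFinite _) (Set.toFinite _), Set.ncard_singleton, add_assoc]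
  rw [hsum] at hle
  constructor
  · rintro (⟨⟨y₀, hy₀⟩, hno⟩ | ⟨hno, ⟨y₀, hy₀⟩⟩)
    · have c1 : S1.ncard = Nat.card (Subgroup.centralizer ({x} : Set G)) := card_sol hy₀
      have c2 : S2 = ∅ := by
        ext y; simp only [hS2, Set.mem_setOf_eq, Set.mem_empty_iff_false, iff_false]
        exact fun h => hno ⟨y, h⟩
      rw [hN, hcompl, c1, c2, Set.ncard_empty]
      rw [c1, c2, Set.ncard_empty] at hle
      push_cast; omega
    · have c2 : S2.ncard = Nat.card (Subgroup.centralizer ({x} : Set G)) := card_sol hy₀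
      have c1 : S1 = ∅ := by
        ext y; simp only [hS1, Set.mem_setOf_eq, Set.mem_empty_iff_false, iff_false]
        exact fun h => hno ⟨y, h⟩
      rw [hN, hcompl, c2, c1, Set.ncard_empty]
      rw [c2, c1, Set.ncard_empty] at hle
      push_cast; omega
  · rintro ⟨⟨y₁, hy₁⟩, ⟨y₂, hy₂⟩⟩
    have c1 : S1.ncard = Nat.card (Subgroup.centralizer ({x} : Set G)) := card_sol hy₁
    have c2 : S2.ncard = Nat.card (Subgroup.centralizer ({x} : Set G)) := card_sol hy₂
    rw [hN, hcompl, c1, c2]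
    rw [c1, c2] at hle
    push_cast; omega
end

section
/- Let G be a finite non-abelian group, H a subgroup of G, and g ∈ G with g ≠ 1 and g² = 1. Let x ∈ H be a vertex of the relative g-noncommuting graph Γ^g_{H,G}. If x is conjugate in G to xg, then the degree of x equals |G| − |C_G(x)| − 1. -/
theorem stmt3 {G : Type*} [Group G] [Fintype G]
    (hG : ¬ ∀ a b : G, a * b = b * a)
    (H : Subgroup G) (g : G) (hg1 : g ≠ 1) (hg2 : g ^ 2 = 1)
    (x : G) (hx : x ∈ H)
    (hconj : ∃ y : G, y⁻¹ * x * y = x * g) :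
    (((relGraph H g).neighborSet x).ncard : ℤ)
      = (Nat.card G : ℤ) - (Nat.card (Subgroup.centralizer ({x} : Set G)) : ℤ) - 1 := by
  obtain ⟨y₀, hy₀⟩ := hconj
  have hginv : g⁻¹ = g := inv_eq_of_mul_eq_one_right (by rw [← pow_two]; exact hg2)
  set S : Set G := {y : G | x⁻¹ * y⁻¹ * x * y = g} with hSdef
  -- neighborSet description
  have hN : (relGraph H g).neighborSet x = (insert x S)ᶜ := by
    ext y
    simp only [SimpleGraph.mem_neighborSet, relGraph, hginv, Set.mem_compl_iff,
      Set.mem_insert_iff, hSdef, Set.mem_setOf_eq, and_self]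
    constructor
    · rintro ⟨hne, -, hc⟩
      push_neg
      exact ⟨fun h => hne h.symm, hc⟩
    · intro h
      push_neg at h
      exact ⟨fun he => h.1 he.symm, Or.inl hx, h.2⟩
  -- S is a right coset of the centralizer
  have hS : S = (· * y₀) '' ((Subgroup.centralizer ({x} : Set G)) : Set G) := by
    ext y
    have key : x⁻¹ * y⁻¹ * x * y = g ↔ x * (y * y₀⁻¹) = (y * y₀⁻¹) * x := by
      constructor
      · intro h
        have h2 : y⁻¹ * x * y = x * g := by rw [← h]; group
        have h3 : y⁻¹ * x * y = y₀⁻¹ * x * y₀ := by rw [h2, hy₀]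
        calc x * (y * y₀⁻¹) = y * (y⁻¹ * x * y) * y₀⁻¹ := by group
          _ = y * (y₀⁻¹ * x * y₀) * y₀⁻¹ := by rw [h3]
          _ = (y * y₀⁻¹) * x := by group
      · intro h
        have h3 : y⁻¹ * x * y = y₀⁻¹ * x * y₀ := by
          calc y⁻¹ * x * y = y⁻¹ * (x * (y * y₀⁻¹)) * y₀ := by group
            _ = y⁻¹ * ((y * y₀⁻¹) * x) * y₀ := by rw [h]
            _ = y₀⁻¹ * x * y₀ := by group
        calc x⁻¹ * y⁻¹ * x * y = x⁻¹ * (y⁻¹ * x * y) := by group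
          _ = x⁻¹ * (y₀⁻¹ * x * y₀) := by rw [h3]
          _ = x⁻¹ * (x * g) := by rw [hy₀]
          _ = g := by group
    simp only [hSdef, Set.mem_setOf_eq, key, Set.mem_image, SetLike.mem_coe,
      Subgroup.mem_centralizer_iff, Set.mem_singleton_iff, forall_eq]
    constructor
    · intro h
      exact ⟨y * y₀⁻¹, h, by group⟩
    · rintro ⟨c, hc, rfl⟩
      simpa using hc
  have hScard : S.ncard = Nat.card (Subgroup.centralizer ({x} : Set G)) := by
    rw [hS, Set.ncard_image_of_injective _ (mul_left_injective y₀),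
      ← Nat.card_coe_set_eq, SetLike.coe_sort_coe]
  have hxS : x ∉ S := by
    simp only [hSdef, Set.mem_setOf_eq]
    intro h
    apply hg1
    rw [← h]; group
  have hsum : ((relGraph H g).neighborSet x).ncard + (S.ncard + 1) = Nat.card G := by
    rw [hN, ← Set.ncard_insert_of_notMem hxS (Set.toFinite S)]
    rw [add_comm]
    exact Set.ncard_add_ncard_compl _
  rw [hScard] at hsum
  omega
end

section
/- Let G be a finite non-abelian group, H a subgroup of G, and g ∈ G with g ≠ 1 and g² = 1. Let x ∈ G \ H be a vertex of the relative g-noncommuting graph Γ^g_{H,G}. If there exists y ∈ H with y⁻¹xy = xg, then the degree of x equals |H| − |C_H(x)|. -/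
theorem stmt6 {G : Type*} [Group G] [Fintype G]
    (hG : ¬ ∀ a b : G, a * b = b * a)
    (H : Subgroup G) (g : G) (hg1 : g ≠ 1) (hg2 : g ^ 2 = 1)
    (x : G) (hx : x ∉ H)
    (hconj : ∃ y ∈ H, y⁻¹ * x * y = x * g) :
    (((relGraph H g).neighborSet x).ncard : ℤ)
      = (Nat.card H : ℤ) - ({y : G | y ∈ H ∧ x * y = y * x}.ncard : ℤ) := by
  classical
  obtain ⟨y₀, hy₀H, hy₀⟩ := hconj
  have hginv : g⁻¹ = g := by
    rw [pow_two] at hg2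
    exact inv_eq_of_mul_eq_one_left hg2
  set S : Set G := {y : G | y ∈ H ∧ x⁻¹ * y⁻¹ * x * y ≠ g} with hS
  set T : Set G := {y : G | y ∈ H ∧ x⁻¹ * y⁻¹ * x * y = g} with hT
  have hset : (relGraph H g).neighborSet x = S := by
    ext y
    simp only [SimpleGraph.mem_neighborSet, relGraph, Set.mem_setOf_eq, hginv, hS]
    constructor
    · rintro ⟨-, hmem, h1, -⟩
      exact ⟨hmem.resolve_left hx, h1⟩
    · rintro ⟨hyH, h1⟩
      exact ⟨fun h => hx (h ▸ hyH), Or.inr hyH, h1, h1⟩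
  -- T maps bijectively to the centralizer set via y ↦ y * y₀⁻¹
  have hTC : (fun y => y * y₀⁻¹) '' T = {y : G | y ∈ H ∧ x * y = y * x} := by
    ext c
    simp only [Set.mem_image, Set.mem_setOf_eq, hT]
    constructor
    · rintro ⟨y, ⟨hyH, hy⟩, rfl⟩
      refine ⟨H.mul_mem hyH (H.inv_mem hy₀H), ?_⟩
      have e1 : y⁻¹ * x * y = x * g := by
        rw [← hy]; group
      have e2 : y⁻¹ * x * y = y₀⁻¹ * x * y₀ := by rw [e1, hy₀]
      have := congrArg (fun z => y * z * y₀⁻¹) e2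
      simp only [mul_assoc] at this ⊢
      simpa [mul_assoc] using this
    · rintro ⟨hcH, hc⟩
      refine ⟨c * y₀, ⟨H.mul_mem hcH hy₀H, ?_⟩, by group⟩
      have : x⁻¹ * (c * y₀)⁻¹ * x * (c * y₀) = x⁻¹ * (y₀⁻¹ * (c⁻¹ * x * c) * y₀) := by
        group
      rw [this]
      have hc' : c⁻¹ * x * c = x := by
        rw [mul_assoc, hc, ← mul_assoc, inv_mul_cancel, one_mul]
      rw [hc', hy₀]
      group
  have hTcard : T.ncard = {y : G | y ∈ H ∧ x * y = y * x}.ncard := by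
    rw [← hTC, Set.ncard_image_of_injective _ (mul_left_injective y₀⁻¹)]
  have hUnion : S ∪ T = (H : Set G) := by
    ext y
    simp only [Set.mem_union, Set.mem_setOf_eq, hS, hT, SetLike.mem_coe]
    constructor
    · rintro (⟨h, -⟩ | ⟨h, -⟩) <;> exact h
    · intro h
      by_cases hg : x⁻¹ * y⁻¹ * x * y = g
      · exact Or.inr ⟨h, hg⟩
      · exact Or.inl ⟨h, hg⟩
  have hdisj : Disjoint S T := by
    rw [Set.disjoint_left]
    rintro y ⟨-, h1⟩ ⟨-, h2⟩
    exact h1 h2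
  have hcardH : S.ncard + T.ncard = Nat.card H := by
    rw [← Set.ncard_union_eq hdisj (Set.toFinite S) (Set.toFinite T), hUnion]
    rw [← Nat.card_coe_set_eq]
    rfl
  rw [hset, ← hTcard]
  have := hcardH
  omega
end

section
/- Let G be a finite non-abelian group, H a subgroup of G, and g ∈ G with g ≠ 1. If H has an element of order 3, then the relative g-noncommuting graph Γ^g_{H,G} contains a triangle (three pairwise adjacent vertices), i.e. Γ^g_{H,G} is not triangle-free. -/
theorem stmt7 {G : Type*} [Group G] [Fintype G]
    (hG : ¬ ∀ a b : G, a * b = b * a)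
    (H : Subgroup G) (g : G) (hg : g ≠ 1)
    (hH : ∃ x : G, x ∈ H ∧ orderOf x = 3) :
    ∃ a b c : G, (relGraph H g).Adj a b ∧ (relGraph H g).Adj b c ∧
      (relGraph H g).Adj a c := by
  obtain ⟨x, hxH, hx3⟩ := hH
  have hx1 : x ≠ 1 := by
    intro h; rw [h, orderOf_one] at hx3; omega
  have hx21 : x * x ≠ 1 := by
    intro h
    have : x ^ 2 = 1 := by rw [pow_two]; exact h
    have := orderOf_dvd_of_pow_eq_one this
    rw [hx3] at this; omega
  have hg' : g⁻¹ ≠ 1 := by simpa using hg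
  refine ⟨1, x, x * x, ⟨hx1.symm, Or.inr hxH, ?_, ?_⟩,
    ⟨fun h => hx1 (by rwa [left_eq_mul] at h), Or.inl hxH, ?_, ?_⟩,
    ⟨fun h => hx21 h.symm, Or.inr (H.mul_mem hxH hxH), ?_, ?_⟩⟩ <;>
  · intro h
    first
    | exact hg (by rw [← h]; group)
    | exact hg' (by rw [← h]; group)
end

section
/- Let G be a finite non-abelian group, H a subgroup of G with H ≠ Z(H,G) and |H| ≠ 2, and g ∈ K(H,G) with g ≠ 1. Then the relative g-noncommuting graph Γ^g_{H,G} is not a tree (i.e. it is not both connected and acyclic). -/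
lemma triangle_not_acyclic {V : Type*} (G : SimpleGraph V) {a b c : V}
    (hab : G.Adj a b) (hbc : G.Adj b c) (hca : G.Adj c a) :
    ¬ G.IsAcyclic := by
  intro h
  refine h (SimpleGraph.Walk.cons hab (SimpleGraph.Walk.cons hbc (SimpleGraph.Walk.cons hca SimpleGraph.Walk.nil))) ?_
  have h1 := hab.ne
  have h2 := hbc.ne
  have h3 := hca.ne
  simp [SimpleGraph.Walk.isCycle_def, SimpleGraph.Walk.isTrail_def, Sym2.eq, Sym2.rel_iff',
    h1, h2, h3, h1.symm, h2.symm, h3.symm]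

/-- commuting distinct elements (with the first in H) are adjacent when g ≠ 1 -/
lemma adj_of_comm {G : Type*} [Group G] {H : Subgroup G} {g : G} (hg : g ≠ 1)
    {x y : G} (hx : x ∈ H) (hne : x ≠ y) (hc : x * y = y * x) :
    (relGraph H g).Adj x y := by
  have hcomm : x⁻¹ * y⁻¹ * x * y = 1 := by
    calc x⁻¹ * y⁻¹ * x * y = x⁻¹ * y⁻¹ * (x * y) := by group
      _ = x⁻¹ * y⁻¹ * (y * x) := by rw [hc]
      _ = 1 := by group
  show x ≠ y ∧ (x ∈ H ∨ y ∈ H) ∧ x⁻¹ * y⁻¹ * x * y ≠ g ∧ x⁻¹ * y⁻¹ * x * y ≠ g⁻¹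
  refine ⟨hne, Or.inl hx, ?_, ?_⟩
  · rw [hcomm]; exact fun h => hg h.symm
  · rw [hcomm]; intro h; exact hg (by rw [← inv_inv g, ← h, inv_one])

theorem stmt9 {G : Type*} [Group G] [Fintype G]
    (hG : ¬ ∀ a b : G, a * b = b * a)
    (H : Subgroup G)
    (hHZ : (H : Set G) ≠ {x : G | x ∈ H ∧ ∀ y : G, x * y = y * x})
    (hH2 : Nat.card H ≠ 2)
    (g : G) (hgK : ∃ x ∈ H, ∃ y : G, x⁻¹ * y⁻¹ * x * y = g) (hg : g ≠ 1) :
    ¬ (relGraph H g).IsTree := by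
  intro htree
  have hacyc := htree.IsAcyclic
  -- obtain a noncentral element of H
  have hx : ∃ x ∈ H, ¬ ∀ y : G, x * y = y * x := by
    by_contra hcon
    push_neg at hcon
    apply hHZ
    ext z
    exact ⟨fun hz => ⟨hz, hcon z hz⟩, fun hz => hz.1⟩
  obtain ⟨x, hxH, hxnc⟩ := hx
  have hx1 : x ≠ 1 := by
    rintro rfl; exact hxnc (fun y => by group)
  -- case split: does H contain an element of order > 2?
  by_cases hsq : ∃ a ∈ H, a * a ≠ 1
  · obtain ⟨a, haH, ha2⟩ := hsq
    have ha1 : a ≠ 1 := by rintro rfl; simp at ha2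
    have h1a : (relGraph H g).Adj 1 a := adj_of_comm hg H.one_mem (Ne.symm ha1) (by group)
    have haa : (relGraph H g).Adj a (a * a) := adj_of_comm hg haH
      (fun h => ha1 (left_eq_mul.mp h)) (by group)
    have haa1 : (relGraph H g).Adj (a * a) 1 :=
      adj_of_comm hg (H.mul_mem haH haH) ha2 (by group)
    exact triangle_not_acyclic _ h1a haa haa1 hacyc
  · push_neg at hsq
    -- H is elementary abelian 2; get a third element
    have hcomm : ∀ a ∈ H, ∀ b ∈ H, a * b = b * a := by
      intro a haH b hbH
      have hab := hsq (a * b) (H.mul_mem haH hbH)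
      have ha := hsq a haH
      have hb := hsq b hbH
      have hai : a⁻¹ = a := by rw [inv_eq_iff_mul_eq_one]; exact ha
      have hbi : b⁻¹ = b := by rw [inv_eq_iff_mul_eq_one]; exact hb
      have : (a * b)⁻¹ = a * b := by rw [inv_eq_iff_mul_eq_one]; exact hab
      calc a * b = (a * b)⁻¹ := this.symm
        _ = b⁻¹ * a⁻¹ := by rw [mul_inv_rev]
        _ = b * a := by rw [hai, hbi]
    -- Nat.card H ≥ 3: get b ∈ H, b ≠ 1, b ≠ x
    have hb : ∃ b ∈ H, b ≠ 1 ∧ b ≠ x := by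
      by_contra hcon
      push_neg at hcon
      have hsub : (H : Set G) ⊆ {1, x} := by
        intro z hz
        rcases eq_or_ne z 1 with h | h
        · exact Or.inl h
        · exact Or.inr (hcon z hz h)
      have hle : Nat.card H ≤ 2 := by
        rw [← SetLike.coe_sort_coe, Nat.card_coe_set_eq]
        calc (H : Set G).ncard ≤ ({1, x} : Set G).ncard := Set.ncard_le_ncard hsub (Set.finite_singleton x |>.insert 1)
          _ ≤ 2 := Set.ncard_insert_le _ _ |>.trans (by simp)
      have hge : 2 ≤ Nat.card H := by
        have : ({1, x} : Set G) ⊆ (H : Set G) := by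
          intro z hz
          rcases hz with h | h
          · rw [h]; exact H.one_mem
          · rw [h]; exact hxH
        rw [← SetLike.coe_sort_coe, Nat.card_coe_set_eq]
        calc 2 = ({1, x} : Set G).ncard := (Set.ncard_pair (Ne.symm hx1)).symm
          _ ≤ (H : Set G).ncard := Set.ncard_le_ncard this (H : Set G).toFinite
      omega
    obtain ⟨b, hbH, hb1, hbx⟩ := hb
    have h1x : (relGraph H g).Adj 1 x := adj_of_comm hg H.one_mem (Ne.symm hx1) (by group)
    have hxb : (relGraph H g).Adj x b := adj_of_comm hg hxH (Ne.symm hbx) (hcomm x hxH b hbH)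
    have hb1' : (relGraph H g).Adj b 1 := adj_of_comm hg hbH hb1 (by group)
    exact triangle_not_acyclic _ h1x hxb hb1' hacyc
end

section
/- Let G be a finite non-abelian group, H a subgroup of G with H ≠ Z(H,G), and g ∈ K(H,G) with g ≠ 1. If |H| ∉ {2, 3, 6}, then the relative g-noncommuting graph Γ^g_{H,G} has no vertex of degree 1. -/
section Aux
variable {G : Type*} [Group G]

lemma coset_eq (K : Subgroup G) (x a y₀ : G)
    (h₀ : y₀ ∈ K ∧ x⁻¹ * y₀⁻¹ * x * y₀ = a) :
    {y : G | y ∈ K ∧ x⁻¹ * y⁻¹ * x * y = a} =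
      (· * y₀) '' {c : G | c ∈ K ∧ x * c = c * x} := by
  obtain ⟨hK, ha⟩ := h₀
  have e2 : y₀⁻¹ * x * y₀ = x * a := by rw [← ha]; group
  ext y
  simp only [Set.mem_setOf_eq, Set.mem_image]
  constructor
  · rintro ⟨hy, hcomm⟩
    have e1 : y⁻¹ * x * y = x * a := by rw [← hcomm]; group
    have h := e1.trans e2.symm
    refine ⟨y * y₀⁻¹, ⟨K.mul_mem hy (K.inv_mem hK), ?_⟩, by group⟩
    calc x * (y * y₀⁻¹) = y * (y⁻¹ * x * y) * y₀⁻¹ := by group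
      _ = y * (y₀⁻¹ * x * y₀) * y₀⁻¹ := by rw [h]
      _ = y * y₀⁻¹ * x := by group
  · rintro ⟨c, ⟨hcK, hc⟩, rfl⟩
    have hc' : c⁻¹ * x * c = x := by rw [mul_assoc, hc]; group
    refine ⟨K.mul_mem hcK hK, ?_⟩
    calc x⁻¹ * (c * y₀)⁻¹ * x * (c * y₀) = x⁻¹ * y₀⁻¹ * (c⁻¹ * x * c) * y₀ := by group
      _ = a := by rw [hc']; exact ha

lemma T_card (K : Subgroup G) (x a y₀ : G)
    (h₀ : y₀ ∈ {y : G | y ∈ K ∧ x⁻¹ * y⁻¹ * x * y = a}) :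
    {y : G | y ∈ K ∧ x⁻¹ * y⁻¹ * x * y = a}.ncard
      = {c : G | c ∈ K ∧ x * c = c * x}.ncard := by
  rw [coset_eq K x a y₀ h₀, Set.ncard_image_of_injective _ (mul_left_injective y₀)]

lemma union_card [Fintype G] (K : Subgroup G) (x g : G) :
    ({y : G | y ∈ K ∧ x⁻¹ * y⁻¹ * x * y = g} ∪
        {y : G | y ∈ K ∧ x⁻¹ * y⁻¹ * x * y = g⁻¹}).ncard = 0 ∨
      ({y : G | y ∈ K ∧ x⁻¹ * y⁻¹ * x * y = g} ∪
        {y : G | y ∈ K ∧ x⁻¹ * y⁻¹ * x * y = g⁻¹}).ncard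
        = {c : G | c ∈ K ∧ x * c = c * x}.ncard ∨
      ({y : G | y ∈ K ∧ x⁻¹ * y⁻¹ * x * y = g} ∪
        {y : G | y ∈ K ∧ x⁻¹ * y⁻¹ * x * y = g⁻¹}).ncard
        = 2 * {c : G | c ∈ K ∧ x * c = c * x}.ncard := by
  set T : G → Set G := fun a => {y : G | y ∈ K ∧ x⁻¹ * y⁻¹ * x * y = a} with hT
  set C : Set G := {c : G | c ∈ K ∧ x * c = c * x} with hC
  show (T g ∪ T g⁻¹).ncard = 0 ∨ (T g ∪ T g⁻¹).ncard = C.ncard ∨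
    (T g ∪ T g⁻¹).ncard = 2 * C.ncard
  rcases (T g).eq_empty_or_nonempty with h1 | h1 <;>
    rcases (T g⁻¹).eq_empty_or_nonempty with h2 | h2
  · left; rw [h1, h2]; simp
  · right; left
    rw [h1, Set.empty_union]
    exact T_card K x g⁻¹ h2.some h2.some_mem
  · right; left
    rw [h2, Set.union_empty]
    exact T_card K x g h1.some h1.some_mem
  · by_cases hgi : g = g⁻¹
    · right; left
      rw [show T g ∪ T g⁻¹ = T g by rw [← hgi, Set.union_self]]
      exact T_card K x g h1.some h1.some_mem
    · right; right
      have hd : Disjoint (T g) (T g⁻¹) := by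
        rw [Set.disjoint_left]
        rintro y ⟨-, hy1⟩ ⟨-, hy2⟩
        exact hgi (hy1.symm.trans hy2)
      rw [Set.ncard_union_eq hd (Set.toFinite _) (Set.toFinite _),
        T_card K x g h1.some h1.some_mem, T_card K x g⁻¹ h2.some h2.some_mem, two_mul]

end Aux

theorem stmt10 {G : Type*} [Group G] [Fintype G]
    (hG : ¬ ∀ a b : G, a * b = b * a)
    (H : Subgroup G)
    (hHZ : (H : Set G) ≠ {x : G | x ∈ H ∧ ∀ y : G, x * y = y * x})
    (hH2 : Nat.card H ≠ 2) (hH3 : Nat.card H ≠ 3) (hH6 : Nat.card H ≠ 6)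
    (g : G) (hgK : ∃ x ∈ H, ∃ y : G, x⁻¹ * y⁻¹ * x * y = g) (hg : g ≠ 1) :
    ∀ x : G, ((relGraph H g).neighborSet x).ncard ≠ 1 := by
  classical
  intro x hdeg
  have hadj : ∀ y, (relGraph H g).Adj x y ↔
      (x ≠ y ∧ (x ∈ H ∨ y ∈ H) ∧ x⁻¹ * y⁻¹ * x * y ≠ g ∧ x⁻¹ * y⁻¹ * x * y ≠ g⁻¹) :=
    fun y => Iff.rfl
  by_cases hx : x ∈ H
  · -- x ∈ H : neighbours are all of G except x and the two "commutator classes"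
    set T : G → Set G := fun a =>
      {y : G | y ∈ (⊤ : Subgroup G) ∧ x⁻¹ * y⁻¹ * x * y = a} with hTdef
    set C : Set G := {c : G | c ∈ (⊤ : Subgroup G) ∧ x * c = c * x} with hCdef
    set U : Set G := T g ∪ T g⁻¹ with hUdef
    have hNS : (relGraph H g).neighborSet x = Set.univ \ insert x U := by
      ext y
      simp only [SimpleGraph.mem_neighborSet, hadj, Set.mem_diff, Set.mem_univ, true_and,
        Set.mem_insert_iff, hUdef, Set.mem_union, hTdef, Set.mem_setOf_eq,
        Subgroup.mem_top, true_and]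
      constructor
      · rintro ⟨hxy, -, h1, h2⟩
        push_neg
        exact ⟨fun h => hxy h.symm, h1, h2⟩
      · intro hy
        push_neg at hy
        exact ⟨fun h => hy.1 h.symm, Or.inl hx, hy.2.1, hy.2.2⟩
    have hxU : x ∉ U := by
      intro hxu
      have h1 : x⁻¹ * x⁻¹ * x * x = 1 := by group
      rcases hxu with h | h
      · exact hg (h.2.symm.trans h1)
      · exact hg (inv_eq_one.mp (h.2.symm.trans h1))
    have hUcard : (insert x U).ncard = 1 + U.ncard := by
      rw [Set.ncard_insert_of_notMem hxU (Set.toFinite _)]; omega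
    have hdiff : ((relGraph H g).neighborSet x).ncard
        = (Set.univ : Set G).ncard - (insert x U).ncard := by
      rw [hNS, Set.ncard_diff (Set.subset_univ _) (Set.toFinite _)]
    have hle : (insert x U).ncard ≤ (Set.univ : Set G).ncard :=
      Set.ncard_le_ncard (Set.subset_univ _) (Set.toFinite _)
    have huniv : (Set.univ : Set G).ncard = Nat.card G := Set.ncard_univ G
    have hn : Nat.card G = 2 + U.ncard := by
      rw [hdiff, hUcard] at hdeg
      omega
    -- identify C with the centralizer of x
    have hCset : C = ((Subgroup.centralizer {x} : Subgroup G) : Set G) := by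
      ext c
      simp only [hCdef, Set.mem_setOf_eq, Subgroup.mem_top, true_and, SetLike.mem_coe,
        Subgroup.mem_centralizer_singleton_iff]
      exact eq_comm
    have hCcard : C.ncard = Nat.card (Subgroup.centralizer ({x} : Set G)) := by
      rw [hCset, ← Nat.card_coe_set_eq]
      rfl
    have hCdvd : C.ncard ∣ Nat.card G := by
      rw [hCcard]; exact Subgroup.card_subgroup_dvd_card _
    have hcpos : 0 < C.ncard := by
      rw [Set.ncard_pos (Set.toFinite _)]
      exact ⟨1, by simp [hCdef]⟩
    -- in the nonempty cases, x ≠ 1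
    have hxne1 : U.Nonempty → x ≠ 1 := by
      rintro ⟨y₀, hy₀⟩ rfl
      rcases hy₀ with h | h
      · exact hg (by rw [← h.2]; group)
      · refine hg (inv_eq_one.mp ?_)
        rw [← h.2]; group
    have hCge2 : U.Nonempty → 2 ≤ C.ncard := by
      intro hne
      have hx1 := hxne1 hne
      have hsub : ({1, x} : Set G) ⊆ C := by
        rintro z (rfl | rfl) <;> simp [hCdef]
      calc 2 = ({1, x} : Set G).ncard := (Set.ncard_pair (Ne.symm hx1)).symm
        _ ≤ C.ncard := Set.ncard_le_ncard hsub (Set.toFinite _)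
    rcases union_card (⊤ : Subgroup G) x g with h0 | h1 | h2
    · -- |G| = 2 : G would be abelian
      have h0' : U.ncard = 0 := h0
      have h2' : Nat.card G = 2 := by rw [hn, h0']
      haveI : Fact (Nat.Prime 2) := ⟨by norm_num⟩
      haveI := isCyclic_of_prime_card (α := G) (p := 2) h2'
      exact hG (IsCyclic.commGroup (α := G)).mul_comm
    · -- |G| = 2 + c with c ∣ |G| : |G| = 4, abelian
      have h1' : U.ncard = C.ncard := h1
      have hne : U.Nonempty := Set.nonempty_of_ncard_ne_zero (by omega)
      rw [hn, h1'] at hCdvd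
      have hd : C.ncard ∣ 2 := by
        simpa using Nat.dvd_sub hCdvd dvd_rfl
      have hle2 : C.ncard ≤ 2 := Nat.le_of_dvd (by norm_num) hd
      have hc2 : C.ncard = 2 := by have := hCge2 hne; omega
      have h4 : Nat.card G = 2 ^ 2 := by rw [hn, h1', hc2]; norm_num
      exact hG (IsPGroup.commutative_of_card_eq_prime_sq h4)
    · -- |G| = 2 + 2c with c ∣ |G| : |G| = 6, so |H| = 1
      have h2' : U.ncard = 2 * C.ncard := h2
      have hne : U.Nonempty := Set.nonempty_of_ncard_ne_zero (by omega)
      rw [hn, h2'] at hCdvd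
      have hd : C.ncard ∣ 2 := by
        simpa using Nat.dvd_sub hCdvd (dvd_mul_left _ 2)
      have hle2 : C.ncard ≤ 2 := Nat.le_of_dvd (by norm_num) hd
      have hc2 : C.ncard = 2 := by have := hCge2 hne; omega
      have h6 : Nat.card G = 6 := by rw [hn, h2', hc2]
      have hHdvd : Nat.card H ∣ 6 := h6 ▸ Subgroup.card_subgroup_dvd_card H
      have hH1 : Nat.card H = 1 := by
        have hle6 : Nat.card H ≤ 6 := Nat.le_of_dvd (by norm_num) hHdvd
        have hpos : 0 < Nat.card H := Nat.pos_of_dvd_of_pos hHdvd (by norm_num)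
        interval_cases h : Nat.card ↥H <;> omega
      have hbot : H = ⊥ := Subgroup.card_eq_one.mp hH1
      exact hxne1 hne (by simpa [hbot, Subgroup.mem_bot] using hx)
  · -- x ∉ H : neighbours lie in H
    set T : G → Set G := fun a => {y : G | y ∈ H ∧ x⁻¹ * y⁻¹ * x * y = a} with hTdef
    set C : Set G := {c : G | c ∈ H ∧ x * c = c * x} with hCdef
    set U : Set G := T g ∪ T g⁻¹ with hUdef
    have hNS : (relGraph H g).neighborSet x = (H : Set G) \ U := by
      ext y
      simp only [SimpleGraph.mem_neighborSet, hadj, Set.mem_diff, SetLike.mem_coe,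
        hUdef, Set.mem_union, hTdef, Set.mem_setOf_eq]
      constructor
      · rintro ⟨hxy, hmem, h1, h2⟩
        have hyH : y ∈ H := hmem.resolve_left hx
        exact ⟨hyH, by push_neg; exact ⟨fun _ => h1, fun _ => h2⟩⟩
      · rintro ⟨hyH, hU⟩
        push_neg at hU
        exact ⟨fun h => hx (h ▸ hyH), Or.inr hyH, hU.1 hyH, hU.2 hyH⟩
    have hUsub : U ⊆ (H : Set G) := by
      rintro y (h | h) <;> exact h.1
    have hdiff : ((relGraph H g).neighborSet x).ncard
        = (H : Set G).ncard - U.ncard := by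
      rw [hNS, Set.ncard_diff hUsub (Set.toFinite _)]
    have hle : U.ncard ≤ (H : Set G).ncard :=
      Set.ncard_le_ncard hUsub (Set.toFinite _)
    have hm : (H : Set G).ncard = 1 + U.ncard := by
      rw [hdiff] at hdeg; omega
    have hmH : Nat.card H = (H : Set G).ncard := Nat.card_coe_set_eq _
    have hCset : C = ((H ⊓ Subgroup.centralizer {x} : Subgroup G) : Set G) := by
      ext c
      simp only [hCdef, Set.mem_setOf_eq, SetLike.mem_coe, Subgroup.mem_inf,
        Subgroup.mem_centralizer_singleton_iff]
      exact and_congr_right fun _ => eq_comm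
    have hCdvd : C.ncard ∣ Nat.card H := by
      have h' : C.ncard = Nat.card (H ⊓ Subgroup.centralizer {x} : Subgroup G) := by
        rw [hCset, ← Nat.card_coe_set_eq]; rfl
      rw [h']
      exact Subgroup.card_dvd_of_le inf_le_left
    rw [hmH, hm] at hCdvd
    rcases union_card H x g with h0 | h1 | h2
    · -- |H| = 1 : H = ⊥, contradicting H ≠ Z(H,G)
      have h0' : U.ncard = 0 := h0
      have hH1 : Nat.card H = 1 := by rw [hmH, hm, h0']
      have hbot : H = ⊥ := Subgroup.card_eq_one.mp hH1
      apply hHZ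
      rw [hbot]
      ext z
      simp only [Subgroup.coe_bot, Set.mem_singleton_iff, Set.mem_setOf_eq,
        Subgroup.mem_bot]
      constructor
      · rintro rfl; exact ⟨rfl, fun y => by rw [one_mul, mul_one]⟩
      · rintro ⟨rfl, -⟩; rfl
    · -- |H| = 1 + c with c ∣ |H| : c = 1, |H| = 2
      have h1' : U.ncard = C.ncard := h1
      rw [h1'] at hCdvd
      have hc1 : C.ncard = 1 :=
        Nat.dvd_one.mp (by simpa using Nat.dvd_sub hCdvd dvd_rfl)
      exact hH2 (by rw [hmH, hm, h1', hc1])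
    · -- |H| = 1 + 2c with c ∣ |H| : c = 1, |H| = 3
      have h2' : U.ncard = 2 * C.ncard := h2
      rw [h2'] at hCdvd
      have hc1 : C.ncard = 1 :=
        Nat.dvd_one.mp (by simpa using Nat.dvd_sub hCdvd (dvd_mul_left _ 2))
      exact hH3 (by rw [hmH, hm, h2', hc1])
end

section
/- Let G be a finite non-abelian group, H a subgroup of G with H ≠ Z(H,G) and |H| ≠ 2, and g ∈ K(H,G) with g ≠ 1. Then the relative g-noncommuting graph Γ^g_{H,G} is not a star graph, i.e. there is no vertex v of Γ^g_{H,G} such that two distinct vertices x, y are adjacent if and only if x = v or y = v. -/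
theorem stmt11 {G : Type*} [Group G] [Fintype G]
    (hG : ¬ ∀ a b : G, a * b = b * a)
    (H : Subgroup G)
    (hHZ : (H : Set G) ≠ {x : G | x ∈ H ∧ ∀ y : G, x * y = y * x})
    (hH2 : Nat.card H ≠ 2)
    (g : G) (hgK : ∃ x ∈ H, ∃ y : G, x⁻¹ * y⁻¹ * x * y = g) (hg : g ≠ 1) :
    ¬ ∃ v : G, ∀ x y : G, x ≠ y →
        ((relGraph H g).Adj x y ↔ (x = v ∨ y = v)) := by
  rintro ⟨v, hv⟩
  have hg' : g⁻¹ ≠ 1 := inv_ne_one.mpr hg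
  push_neg at hG
  obtain ⟨a0, b0, hab⟩ := hG
  have ha0 : a0 ≠ 1 := by rintro rfl; simp at hab
  have hb0 : b0 ≠ 1 := by rintro rfl; simp at hab
  have hab' : a0 ≠ b0 := by rintro rfl; exact hab rfl
  -- Step 1: v = 1
  have hv1 : v = 1 := by
    by_contra hne
    obtain ⟨y, hy1, hyv⟩ : ∃ y : G, y ≠ 1 ∧ y ≠ v := by
      by_cases h : a0 = v
      · exact ⟨b0, hb0, fun hb => hab' (h.trans hb.symm)⟩
      · exact ⟨a0, ha0, h⟩
    have hc : (1 : G)⁻¹ * y⁻¹ * 1 * y = 1 := by group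
    have hadj : (relGraph H g).Adj 1 y :=
      ⟨Ne.symm hy1, Or.inl H.one_mem, by rw [hc]; exact fun h => hg h.symm,
        by rw [hc]; exact fun h => hg' h.symm⟩
    rcases (hv 1 y (Ne.symm hy1)).mp hadj with h | h
    · exact hne h.symm
    · exact hyv h
  subst hv1
  -- Key contradiction lemma
  have key : ∀ x y : G, x ≠ y → x ≠ 1 → y ≠ 1 → (x ∈ H ∨ y ∈ H) →
      x⁻¹ * y⁻¹ * x * y = 1 → False := by
    intro x y hxy hx hy hmem hc
    have hadj : (relGraph H g).Adj x y :=
      ⟨hxy, hmem, by rw [hc]; exact fun h => hg h.symm,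
        by rw [hc]; exact fun h => hg' h.symm⟩
    rcases (hv x y hxy).mp hadj with h | h
    exacts [hx h, hy h]
  -- Extract a noncentral element of H
  have hsub : {x : G | x ∈ H ∧ ∀ y : G, x * y = y * x} ⊆ (H : Set G) :=
    fun x hx => hx.1
  have hnsub : ¬ (H : Set G) ⊆ {x : G | x ∈ H ∧ ∀ y : G, x * y = y * x} :=
    fun h => hHZ (le_antisymm h hsub)
  obtain ⟨a, haH, hanc⟩ := Set.not_subset.mp hnsub
  have ha1 : a ≠ 1 := by
    rintro rfl
    exact hanc ⟨H.one_mem, fun y => by group⟩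
  -- every nonidentity element of H is an involution
  have hinv : ∀ x : G, x ∈ H → x ≠ 1 → x * x = 1 := by
    intro x hx hx1
    by_contra hxx
    have hne : x ≠ x * x := fun h => hx1 (by
      have := mul_left_cancel (a := x) (b := (1:G)) (c := x) (by rw [mul_one]; exact h)
      exact this.symm)
    exact key x (x * x) hne hx1 hxx (Or.inl hx) (by group)
  -- find a second nonidentity element of H
  obtain ⟨b, hbH, hb1, hba⟩ : ∃ b ∈ H, b ≠ 1 ∧ b ≠ a := by
    by_contra hcon
    push_neg at hcon
    have hset : (H : Set G) = {1, a} := by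
      apply Set.eq_of_subset_of_subset
      · intro x hx
        by_cases h1 : x = 1
        · exact Or.inl h1
        · exact Or.inr (hcon x hx h1)
      · rintro x (rfl | rfl)
        · exact H.one_mem
        · exact haH
    apply hH2
    rw [← SetLike.coe_sort_coe, Nat.card_coe_set_eq, hset,
      Set.ncard_pair (Ne.symm ha1)]
  -- a and b are commuting involutions in H
  have haa : a * a = 1 := hinv a haH ha1
  have hbb : b * b = 1 := hinv b hbH hb1
  have habH : a * b ∈ H := H.mul_mem haH hbH
  have hab1 : a * b ≠ 1 := by
    intro h
    have hb' : b = a⁻¹ := eq_inv_of_mul_eq_one_right h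
    exact hba (hb'.trans (inv_eq_of_mul_eq_one_left haa))
  have habab : (a * b) * (a * b) = 1 := hinv (a * b) habH hab1
  have hc : a⁻¹ * b⁻¹ * a * b = 1 := by
    rw [inv_eq_of_mul_eq_one_left haa, inv_eq_of_mul_eq_one_left hbb]
    calc a * b * a * b = (a * b) * (a * b) := by group
    _ = 1 := habab
  exact key a b (Ne.symm hba) ha1 hb1 (Or.inl haH) hc
end

section
/- Let G be a finite non-abelian group of odd order, H a subgroup of G with H ≠ Z(H,G), and g ∈ K(H,G) with g ≠ 1. Then the relative g-noncommuting graph Γ^g_{H,G} is not a tree. -/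
theorem stmt12 {G : Type*} [Group G] [Fintype G]
    (hG : ¬ ∀ a b : G, a * b = b * a)
    (hodd : Odd (Nat.card G))
    (H : Subgroup G)
    (hHZ : (H : Set G) ≠ {x : G | x ∈ H ∧ ∀ y : G, x * y = y * x})
    (g : G) (hgK : ∃ x ∈ H, ∃ y : G, x⁻¹ * y⁻¹ * x * y = g) (hg : g ≠ 1) :
    ¬ (relGraph H g).IsTree := by
  intro ht
  -- g⁻¹ ≠ 1
  have hg' : g⁻¹ ≠ 1 := by simpa using hg
  -- get a non-central element x of H
  obtain ⟨x, hxH, y0, hy0⟩ : ∃ x ∈ H, ∃ y : G, x * y ≠ y * x := by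
    by_contra h
    push_neg at h
    apply hHZ
    ext z
    simp only [Set.mem_setOf_eq, SetLike.mem_coe]
    exact ⟨fun hz => ⟨hz, h z hz⟩, fun hz => hz.1⟩
  have hx1 : x ≠ 1 := by
    rintro rfl
    exact hy0 (by group)
  have hx2 : x * x ≠ 1 := by
    intro h
    have h2 : x ^ 2 = 1 := by rw [pow_two]; exact h
    have hd : orderOf x ∣ 2 := orderOf_dvd_of_pow_eq_one h2
    have hdc : orderOf x ∣ Nat.card G := by
      simpa [Nat.card_eq_fintype_card] using orderOf_dvd_card (x := x)
    rcases (Nat.dvd_prime Nat.prime_two).mp hd with h | h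
    · exact hx1 (orderOf_eq_one_iff.mp h)
    · rw [h] at hdc
      exact (Nat.not_even_iff_odd.mpr hodd) (even_iff_two_dvd.mpr hdc)
  have hx2x : x * x ≠ x := fun h => hx1 (by simpa using mul_right_cancel (h.trans (one_mul x).symm))
  -- adjacency of 1 to any z ≠ 1
  have hadj1 : ∀ z : G, z ≠ 1 → (relGraph H g).Adj 1 z := by
    intro z hz
    refine ⟨fun h => hz h.symm, Or.inl H.one_mem, ?_, ?_⟩ <;>
      · intro h
        first
          | exact hg (by rw [← h]; group)
          | exact hg' (by rw [← h]; group)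
  have hadjA : (relGraph H g).Adj x (x * x) := by
    refine ⟨fun h => hx2x h.symm, Or.inl hxH, ?_, ?_⟩ <;>
      · intro h
        first
          | exact hg (by rw [← h]; group)
          | exact hg' (by rw [← h]; group)
  have hacyc := ht.2
  rw [SimpleGraph.isAcyclic_iff_forall_adj_isBridge] at hacyc
  have hb := hacyc hadjA
  rw [SimpleGraph.isBridge_iff] at hb
  have hnr := hb
  apply hnr
  have a1 : ((relGraph H g) \ SimpleGraph.fromEdgeSet {s(x, x * x)}).Adj x 1 := by
    constructor
    · exact ((hadj1 x hx1).symm)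
    · simp only [SimpleGraph.fromEdgeSet_adj, Set.mem_singleton_iff]
      intro hcon
      rcases Sym2.eq_iff.mp hcon.1 with ⟨_, h⟩ | ⟨h, _⟩
      · exact hx2 h.symm
      · exact hx2x h.symm
  have a2 : ((relGraph H g) \ SimpleGraph.fromEdgeSet {s(x, x * x)}).Adj 1 (x * x) := by
    constructor
    · exact hadj1 (x * x) hx2
    · simp only [SimpleGraph.fromEdgeSet_adj, Set.mem_singleton_iff]
      intro hcon
      rcases Sym2.eq_iff.mp hcon.1 with ⟨h, _⟩ | ⟨h, _⟩
      · exact hx1 h.symm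
      · exact hx2 h.symm
  exact a1.reachable.trans a2.reachable
end

section
/- Let G be a finite non-abelian group, H a subgroup of G with H ≠ Z(H,G), and g ∈ K(H,G) with g ≠ 1. Then the relative g-noncommuting graph Γ^g_{H,G} is a star graph if and only if G is isomorphic to the symmetric group S₃ and |H| = 2. -/
set_option maxHeartbeats 1000000 in
lemma s3_cent : ∀ a b : Equiv.Perm (Fin 3), a*a = 1 → a ≠ 1 → a*b = b*a → b = 1 ∨ b = a := by
  decide

set_option maxHeartbeats 1000000 in
lemma s3_comm : ∀ a b c : Equiv.Perm (Fin 3), a*a = 1 → a*b ≠ b*a → a*c ≠ c*a →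
    a⁻¹*c⁻¹*a*c = a⁻¹*b⁻¹*a*b ∨ a⁻¹*c⁻¹*a*c = (a⁻¹*b⁻¹*a*b)⁻¹ := by
  decide

/-- permCongr as a MulEquiv -/
def permMulCongr {α β : Type*} (e : α ≃ β) : Equiv.Perm α ≃* Equiv.Perm β :=
  { e.permCongr with
    map_mul' := fun p q => by
      ext x
      simp [Equiv.permCongr_apply] }

lemma build_iso {G : Type*} [Group G] [Fintype G] (t a : G)
    (ht1 : t ≠ 1) (ht2 : t * t = 1)
    (hg1 : t⁻¹ * a⁻¹ * t * a ≠ 1)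
    (hcov : ∀ y : G, y = 1 ∨ y = t ∨ t⁻¹*y⁻¹*t*y = t⁻¹*a⁻¹*t*a ∨
      t⁻¹*y⁻¹*t*y = (t⁻¹*a⁻¹*t*a)⁻¹) :
    Nonempty (G ≃* Equiv.Perm (Fin 3)) := by
  classical
  set g : G := t⁻¹*a⁻¹*t*a with hgdef
  have htinv : t⁻¹ = t := inv_eq_of_mul_eq_one_right ht2
  -- centralizer of t is {1, t}
  have hg1' : g⁻¹ ≠ 1 := inv_ne_one.mpr hg1
  have hC : ∀ w : G, t*w = w*t → w = 1 ∨ w = t := by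
    intro w hw
    have hcw : t⁻¹*w⁻¹*t*w = 1 := by
      calc t⁻¹*w⁻¹*t*w = t⁻¹*w⁻¹*(t*w) := by group
        _ = t⁻¹*w⁻¹*(w*t) := by rw [hw]
        _ = 1 := by group
    rcases hcov w with h | h | h | h
    · exact Or.inl h
    · exact Or.inr h
    · exact absurd (h.symm.trans hcw) hg1
    · exact absurd (h.symm.trans hcw) hg1'
  have hna : t*a ≠ a*t := by
    intro hw
    rcases hC a hw with h | h
    · exact hg1 (by rw [hgdef, h]; group)
    · exact hg1 (by rw [hgdef, h]; group)
  have ha1 : a ≠ 1 := fun h => hg1 (by rw [hgdef, h]; group)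
  have hat : a ≠ t := fun h => hna (by rw [h])
  -- s = a⁻¹ t a
  have hs2 : (a⁻¹*t*a) * (a⁻¹*t*a) = 1 := by
    calc (a⁻¹*t*a) * (a⁻¹*t*a) = a⁻¹*(t*t)*a := by group
      _ = 1 := by rw [ht2]; group
  have hsinv : (a⁻¹*t*a)⁻¹ = a⁻¹*t*a := inv_eq_of_mul_eq_one_right hs2
  have hgts : g = t * (a⁻¹*t*a) := by rw [hgdef, htinv]; group
  have hginv : g⁻¹ = (a⁻¹*t*a) * t := by
    rw [hgts, mul_inv_rev, htinv, hsinv]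
  have hgg : g ≠ g⁻¹ := by
    intro h
    have hcomm : t * (a⁻¹*t*a) = (a⁻¹*t*a) * t := by rw [← hgts, h, hginv]
    rcases hC _ hcomm with hh | hh
    · apply ht1
      have h4 : t = a * (a⁻¹*t*a) * a⁻¹ := by group
      rw [h4, hh]; group
    · apply hna
      calc t*a = a*(a⁻¹*t*a) := by group
        _ = a*t := by rw [hh]
  -- commutator values determine cosets
  have hcoset : ∀ y z : G, t⁻¹*y⁻¹*t*y = t⁻¹*z⁻¹*t*z → z = y ∨ z = t*y := by
    intro y z h
    have h' : y⁻¹*t*y = z⁻¹*t*z := by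
      have := congrArg (fun u => t * u) h
      simpa [← mul_assoc, ht2] using this
    have hw : t * (z*y⁻¹) = (z*y⁻¹) * t := by
      calc t * (z*y⁻¹) = z * (z⁻¹*t*z) * y⁻¹ := by group
        _ = z * (y⁻¹*t*y) * y⁻¹ := by rw [h']
        _ = (z*y⁻¹) * t := by group
    rcases hC _ hw with h | h
    · left; have : z = 1 * y := by rw [← h]; group
      simpa using this
    · right; rw [← h]; group
  -- commutator of t with a*t is g⁻¹
  have hcat : t⁻¹*(a*t)⁻¹*t*(a*t) = g⁻¹ := by
    rw [hginv, htinv]; group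
  -- the universe is 6 explicit elements
  have hlist : ∀ y : G, y = 1 ∨ y = t ∨ y = a ∨ y = t*a ∨ y = a*t ∨ y = t*(a*t) := by
    intro y
    rcases hcov y with h | h | h | h
    · exact Or.inl h
    · exact Or.inr (Or.inl h)
    · rcases hcoset a y h.symm with h' | h'
      · exact Or.inr (Or.inr (Or.inl h'))
      · exact Or.inr (Or.inr (Or.inr (Or.inl h')))
    · rcases hcoset (a*t) y (by rw [hcat, h]) with h' | h'
      · exact Or.inr (Or.inr (Or.inr (Or.inr (Or.inl h'))))
      · exact Or.inr (Or.inr (Or.inr (Or.inr (Or.inr h'))))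
  -- disequalities
  have d12 : (1:G) ≠ t := Ne.symm ht1
  have d13 : (1:G) ≠ a := Ne.symm ha1
  have d14 : (1:G) ≠ t*a := fun h =>
    hat ((eq_inv_of_mul_eq_one_right h.symm).trans htinv)
  have d15 : (1:G) ≠ a*t := fun h =>
    hat ((eq_inv_of_mul_eq_one_left h.symm).trans htinv)
  have d16 : (1:G) ≠ t*(a*t) := by
    intro h
    apply ha1
    have h2 : a*t = t := (eq_inv_of_mul_eq_one_right h.symm).trans htinv
    exact mul_right_cancel (h2.trans (one_mul t).symm)
  have d23 : t ≠ a := Ne.symm hat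
  have d24 : t ≠ t*a := fun h => ha1 (mul_left_cancel ((mul_one t).trans h)).symm
  have d25 : t ≠ a*t := fun h => ha1 (mul_right_cancel ((one_mul t).trans h)).symm
  have d26 : t ≠ t*(a*t) := fun h => d15 (mul_left_cancel ((mul_one t).trans h))
  have d34 : a ≠ t*a := fun h => ht1 (mul_right_cancel ((one_mul a).trans h)).symm
  have d35 : a ≠ a*t := fun h => ht1 (mul_left_cancel ((mul_one a).trans h)).symm
  have d36 : a ≠ t*(a*t) := by
    intro h
    apply hna
    calc t*a = t*(t*(a*t)) := by rw [← h]
      _ = a*t := by rw [← mul_assoc, ht2, one_mul]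
  have d45 : t*a ≠ a*t := hna
  have d46 : t*a ≠ t*(a*t) := fun h => d35 (mul_left_cancel h)
  have d56 : a*t ≠ t*(a*t) := fun h => d34 (mul_right_cancel (h.trans (mul_assoc t a t).symm))
  -- cardinality of G
  have hc6 : ({1, t, a, t*a, a*t, t*(a*t)} : Finset G).card = 6 := by
    rw [Finset.card_insert_of_notMem (by simp [d12, d13, d14, d15, d16]),
        Finset.card_insert_of_notMem (by simp [d23, d24, d25, d26]),
        Finset.card_insert_of_notMem (by simp [d34, d35, d36]),
        Finset.card_insert_of_notMem (by simp [d45, d46]),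
        Finset.card_insert_of_notMem (by simp [d56]),
        Finset.card_singleton]
  have hsub : (Finset.univ : Finset G) ⊆ {1, t, a, t*a, a*t, t*(a*t)} := by
    intro y _
    simp only [Finset.mem_insert, Finset.mem_singleton]
    exact hlist y
  have hcard : Fintype.card G = 6 := by
    have h1 := Finset.card_le_card hsub
    have h2 := Finset.card_le_card
      (Finset.subset_univ ({1, t, a, t*a, a*t, t*(a*t)} : Finset G))
    rw [hc6] at h1 h2
    rw [← Finset.card_univ]
    omega
  -- the conjugacy class of t
  set S : Set G := {t, t*g, t*g⁻¹} with hSdef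
  have htS : t ∈ S := Or.inl rfl
  have htgS : t*g ∈ S := Or.inr (Or.inl rfl)
  have htg'S : t*g⁻¹ ∈ S := Or.inr (Or.inr rfl)
  have hconj' : ∀ z : G, z⁻¹ * t * z ∈ S := by
    intro z
    have key : z⁻¹*t*z = t*(t⁻¹*z⁻¹*t*z) := by group
    rcases hcov z with h | h | h | h
    · rw [h]; simpa using htS
    · rw [h, show t⁻¹*t*t = t by group]; exact htS
    · rw [key, h]; exact htgS
    · rw [key, h]; exact htg'S
  have hrep : ∀ s ∈ S, ∃ z : G, z⁻¹*t*z = s := by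
    intro s hs
    rcases hs with rfl | rfl | rfl
    · exact ⟨1, by group⟩
    · exact ⟨a, by rw [hgts, ← mul_assoc, ht2, one_mul]⟩
    · refine ⟨a*t, ?_⟩
      calc (a*t)⁻¹*t*(a*t) = t⁻¹*(a⁻¹*t*a*t) := by group
        _ = t*(a⁻¹*t*a*t) := by rw [htinv]
        _ = t*g⁻¹ := by rw [hginv]
  have hconj : ∀ x s : G, s ∈ S → x*s*x⁻¹ ∈ S := by
    intro x s hs
    obtain ⟨z, rfl⟩ := hrep s hs
    rw [show x*(z⁻¹*t*z)*x⁻¹ = (z*x⁻¹)⁻¹*t*(z*x⁻¹) by group]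
    exact hconj' _
  have dS1 : t ≠ t*g := fun h => hg1 (mul_left_cancel ((mul_one t).trans h)).symm
  have dS2 : t ≠ t*g⁻¹ := fun h => hg1' (mul_left_cancel ((mul_one t).trans h)).symm
  have dS3 : t*g ≠ t*g⁻¹ := fun h => hgg (mul_left_cancel h)
  have hScard : Nat.card ↥S = 3 := by
    rw [Nat.card_coe_set_eq, hSdef,
      Set.ncard_insert_of_notMem (by simp [dS1, dS2]) (Set.toFinite _),
      Set.ncard_pair dS3]
  let e3 : ↥S ≃ Fin 3 := (Finite.equivFin ↥S).trans (finCongr hScard)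
  let φ : G →* Equiv.Perm ↥S :=
    { toFun := fun x =>
        { toFun := fun s => ⟨x*s*x⁻¹, hconj x s s.2⟩
          invFun := fun s => ⟨x⁻¹*s*x, by simpa using hconj x⁻¹ s s.2⟩
          left_inv := fun s => Subtype.ext (by simp only; group)
          right_inv := fun s => Subtype.ext (by simp only; group) }
      map_one' := by
        ext s
        simp
      map_mul' := fun x y => by
        ext s
        simp only [Equiv.coe_fn_mk, Equiv.Perm.coe_mul, Function.comp_apply]
        group }
  have hφapp : ∀ (x : G) (s : ↥S), ((φ x s : ↥S) : G) = x*s*x⁻¹ := fun x s => rfl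
  have hφinj : Function.Injective φ := by
    intro x y h
    have h1 : x*t*x⁻¹ = y*t*y⁻¹ := by
      have := congrArg (fun p : Equiv.Perm ↥S => ((p ⟨t, htS⟩ : ↥S) : G)) h
      simpa [hφapp] using this
    have h2 : x*(t*g)*x⁻¹ = y*(t*g)*y⁻¹ := by
      have := congrArg (fun p : Equiv.Perm ↥S => ((p ⟨t*g, htgS⟩ : ↥S) : G)) h
      simpa [hφapp] using this
    have hw : t*(y⁻¹*x) = (y⁻¹*x)*t := by
      calc t*(y⁻¹*x) = y⁻¹*(y*t*y⁻¹)*x := by group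
        _ = y⁻¹*(x*t*x⁻¹)*x := by rw [h1]
        _ = (y⁻¹*x)*t := by group
    rcases hC _ hw with hh | hh
    · have hx : x = y * (y⁻¹*x) := by group
      rw [hx, hh, mul_one]
    · exfalso
      have hw2 : (t*g)*(y⁻¹*x) = (y⁻¹*x)*(t*g) := by
        calc (t*g)*(y⁻¹*x) = y⁻¹*(y*(t*g)*y⁻¹)*x := by group
          _ = y⁻¹*(x*(t*g)*x⁻¹)*x := by rw [h2]
          _ = (y⁻¹*x)*(t*g) := by group
      rw [hh] at hw2
      have hgt : g*t = t*g := by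
        calc g*t = t*((t*g)*t) := by rw [← mul_assoc, ← mul_assoc, ht2, one_mul]
          _ = t*(t*(t*g)) := by rw [hw2]
          _ = t*g := by rw [← mul_assoc, ht2, one_mul]
      rcases hC g hgt.symm with hh2 | hh2
      · exact hg1 hh2
      · exact hgg (by rw [hh2, htinv])
  let ψ : G →* Equiv.Perm (Fin 3) := (permMulCongr e3).toMonoidHom.comp φ
  have hψinj : Function.Injective ψ := by
    rw [show (ψ : G → Equiv.Perm (Fin 3)) = (permMulCongr e3) ∘ φ from rfl]
    exact (permMulCongr e3).injective.comp hφinj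
  have hcards : Fintype.card G = Fintype.card (Equiv.Perm (Fin 3)) := by
    rw [hcard, Fintype.card_perm, Fintype.card_fin]
    rfl
  exact ⟨MulEquiv.ofBijective ψ
    ((Fintype.bijective_iff_injective_and_card ψ).mpr ⟨hψinj, hcards⟩)⟩

theorem stmt13 {G : Type*} [Group G] [Fintype G]
    (hG : ¬ ∀ a b : G, a * b = b * a)
    (H : Subgroup G)
    (hHZ : (H : Set G) ≠ {x : G | x ∈ H ∧ ∀ y : G, x * y = y * x})
    (g : G) (hgK : ∃ x ∈ H, ∃ y : G, x⁻¹ * y⁻¹ * x * y = g) (hg : g ≠ 1) :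
    (∃ v : G, ∀ x y : G, x ≠ y →
        ((relGraph H g).Adj x y ↔ (x = v ∨ y = v))) ↔
      (Nonempty (G ≃* Equiv.Perm (Fin 3)) ∧ Nat.card H = 2) := by
  classical
  have hg' : g⁻¹ ≠ 1 := inv_ne_one.mpr hg
  constructor
  · rintro ⟨v, hv⟩
    -- adjacency of 1 with everything
    have hadj1 : ∀ y : G, y ≠ 1 → (relGraph H g).Adj 1 y := by
      intro y hy
      refine ⟨Ne.symm hy, Or.inl H.one_mem, ?_, ?_⟩
      · rw [show (1:G)⁻¹ * y⁻¹ * 1 * y = 1 by group]; exact Ne.symm hg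
      · rw [show (1:G)⁻¹ * y⁻¹ * 1 * y = 1 by group]; exact fun h => hg' h.symm
    -- the center of the star is 1
    have hv1 : v = 1 := by
      by_contra hv1
      push_neg at hG
      obtain ⟨c, d, hcd⟩ := hG
      have hc1 : c ≠ 1 := fun h => hcd (by rw [h, one_mul, mul_one])
      have hd1 : d ≠ 1 := fun h => hcd (by rw [h, one_mul, mul_one])
      have hcdne : c ≠ d := fun h => hcd (by rw [h])
      set x : G := if c = v then d else c with hx
      have hxv : x ≠ v := by
        rw [hx]; split
        · rename_i h; exact fun h2 => hcdne (h.trans h2.symm)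
        · assumption
      have hx1 : x ≠ 1 := by
        rw [hx]; split <;> assumption
      rcases (hv 1 x (Ne.symm hx1)).mp (hadj1 x hx1) with h | h
      · exact hv1 h.symm
      · exact hxv h
    -- non-adjacency facts
    have hnadj : ∀ x y : G, x ≠ 1 → y ≠ 1 → x ≠ y → x ∈ H →
        x⁻¹*y⁻¹*x*y = g ∨ x⁻¹*y⁻¹*x*y = g⁻¹ := by
      intro x y hx1 hy1 hxy hxH
      have hne : ¬ (relGraph H g).Adj x y := by
        intro h
        rcases (hv x y hxy).mp h with h' | h'
        · exact hx1 (h'.trans hv1)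
        · exact hy1 (h'.trans hv1)
      simp only [relGraph, ne_eq] at hne
      push_neg at hne
      have h12 := hne hxy (Or.inl hxH)
      by_cases hcase : x⁻¹*y⁻¹*x*y = g
      · exact Or.inl hcase
      · exact Or.inr (h12 hcase)
    -- element of H that is not central
    have hnsub : ¬ (H : Set G) ⊆ {x : G | x ∈ H ∧ ∀ y : G, x * y = y * x} := by
      intro hsub
      exact hHZ (Set.Subset.antisymm hsub (fun x hx => hx.1))
    obtain ⟨t, htH, htnc⟩ := Set.not_subset.mp hnsub
    simp only [Set.mem_setOf_eq, not_and] at htnc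
    have htnc' : ¬ ∀ y : G, t * y = y * t := fun h => htnc htH h
    push_neg at htnc'
    obtain ⟨w, hw⟩ := htnc'
    have ht1 : t ≠ 1 := by
      intro h
      exact hw (by rw [h, one_mul, mul_one])
    -- every nonidentity element of H squares to 1
    have hsq : ∀ x : G, x ∈ H → x ≠ 1 → x * x = 1 := by
      intro x hxH hx1
      by_contra hxx
      have hxxx : x ≠ x*x := fun h => hx1 (mul_left_cancel ((mul_one x).trans h)).symm
      rcases hnadj x (x*x) hx1 hxx hxxx hxH with h | h
      · exact hg (by rw [← h]; group)
      · exact hg' (by rw [← h]; group)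
    have htt : t * t = 1 := hsq t htH ht1
    have htinv : t⁻¹ = t := inv_eq_of_mul_eq_one_right htt
    -- H = {1, t}
    have hHmem : ∀ x : G, x ∈ H → x = 1 ∨ x = t := by
      intro x hxH
      by_contra hcon
      push_neg at hcon
      obtain ⟨hx1, hxt⟩ := hcon
      have hxx := hsq x hxH hx1
      have hxt1 : x*t ≠ 1 := by
        intro h
        exact hxt ((eq_inv_of_mul_eq_one_left h).trans htinv)
      have hxtsq := hsq (x*t) (H.mul_mem hxH htH) hxt1
      have hcomm : x⁻¹*t⁻¹*x*t = 1 := by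
        have hxinv : x⁻¹ = x := inv_eq_of_mul_eq_one_right hxx
        rw [hxinv, htinv, show x*t*x*t = x*t*(x*t) by group, hxtsq]
      rcases hnadj x t hx1 ht1 hxt hxH with h | h
      · exact hg (by rw [← h, hcomm])
      · exact hg' (by rw [← h, hcomm])
    -- the commutator witness for g must use t
    obtain ⟨x₀, hx₀H, y₀, hy₀⟩ := hgK
    have hx₀1 : x₀ ≠ 1 := by
      intro h
      exact hg (by rw [← hy₀, h]; group)
    have hx₀t : x₀ = t := (hHmem x₀ hx₀H).resolve_left hx₀1
    rw [hx₀t] at hy₀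
    -- the coverage hypothesis
    have hcov : ∀ y : G, y = 1 ∨ y = t ∨ t⁻¹*y⁻¹*t*y = t⁻¹*y₀⁻¹*t*y₀ ∨
        t⁻¹*y⁻¹*t*y = (t⁻¹*y₀⁻¹*t*y₀)⁻¹ := by
      intro y
      by_cases hy1 : y = 1
      · exact Or.inl hy1
      by_cases hyt : y = t
      · exact Or.inr (Or.inl hyt)
      rcases hnadj t y ht1 hy1 (fun h => hyt h.symm) htH with h | h
      · exact Or.inr (Or.inr (Or.inl (by rw [h, hy₀])))
      · exact Or.inr (Or.inr (Or.inr (by rw [h, hy₀])))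
    have hgne : t⁻¹*y₀⁻¹*t*y₀ ≠ 1 := by rw [hy₀]; exact hg
    refine ⟨build_iso t y₀ ht1 htt hgne hcov, ?_⟩
    -- cardinality of H
    have hHset : (H : Set G) = {1, t} := by
      ext x
      constructor
      · intro hx
        exact hHmem x hx
      · rintro (rfl | rfl)
        · exact H.one_mem
        · exact htH
    have hcongr : Nat.card H = Nat.card (({1, t} : Set G)) :=
      Nat.card_congr (Equiv.setCongr hHset)
    rw [hcongr, Nat.card_coe_set_eq, Set.ncard_pair (Ne.symm ht1)]
  · rintro ⟨⟨e⟩, hH⟩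
    obtain ⟨t, ht1, htu⟩ := (Nat.card_eq_two_iff' (1 : H)).mp hH
    have htt' : t * t = (1 : H) := by
      by_contra h
      have h2 := htu (t*t) h
      exact ht1 (mul_left_cancel (h2.trans (mul_one t).symm))
    have htt : (t:G) * t = 1 := by
      have := congrArg (fun z : H => (z : G)) htt'
      simpa using this
    have ht1' : (t:G) ≠ 1 := by
      intro h
      exact ht1 (Subtype.ext (by simpa using h))
    obtain ⟨x₀, hx₀H, y₀, hy₀⟩ := hgK
    have hx₀1 : x₀ ≠ 1 := by
      intro h
      exact hg (by rw [← hy₀, h]; group)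
    have hx₀t : x₀ = (t:G) := by
      have h3 : (⟨x₀, hx₀H⟩ : H) = t :=
        htu _ (fun h => hx₀1 (by simpa using congrArg Subtype.val h))
      simpa using congrArg Subtype.val h3
    rw [hx₀t] at hy₀
    have hmemt : ∀ x : G, x ∈ H → x = 1 ∨ x = (t:G) := by
      intro x hx
      by_cases h : x = 1
      · exact Or.inl h
      · refine Or.inr ?_
        have h3 : (⟨x, hx⟩ : H) = t :=
          htu _ (fun h2 => h (by simpa using congrArg Subtype.val h2))
        simpa using congrArg Subtype.val h3
    have emap : ∀ x y : G, e (x⁻¹*y⁻¹*x*y) = (e x)⁻¹*(e y)⁻¹*(e x)*(e y) := by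
      intro x y
      simp [map_mul, map_inv]
    have ett : e t * e t = 1 := by rw [← map_mul, htt, map_one]
    have et1 : e t ≠ 1 := fun h => ht1' (by
      apply e.injective
      rw [h, map_one])
    have hty₀ : e t * e y₀ ≠ e y₀ * e t := by
      intro h
      have hc : (t:G) * y₀ = y₀ * t := e.injective (by rw [map_mul, map_mul, h])
      apply hg
      rw [← hy₀]
      calc (t:G)⁻¹*y₀⁻¹*(t:G)*y₀ = (t:G)⁻¹*y₀⁻¹*((t:G)*y₀) := by group
        _ = (t:G)⁻¹*y₀⁻¹*(y₀*(t:G)) := by rw [hc]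
        _ = 1 := by group
    have key : ∀ z : G, z ≠ 1 → z ≠ (t:G) →
        ((t:G)⁻¹*z⁻¹*t*z = g ∨ (t:G)⁻¹*z⁻¹*t*z = g⁻¹) := by
      intro z hz1 hzt
      have hcz : e t * e z ≠ e z * e t := by
        intro h
        rcases s3_cent (e t) (e z) ett et1 h with h' | h'
        · exact hz1 (e.injective (by rw [h', map_one]))
        · exact hzt (e.injective h')
      rcases s3_comm (e t) (e y₀) (e z) ett hty₀ hcz with h | h
      · left
        rw [← hy₀]
        apply e.injective
        rw [emap, emap]
        exact h
      · right
        apply e.injective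
        rw [map_inv, ← hy₀, emap, emap]
        exact h
    refine ⟨1, fun x y hxy => ⟨?_, ?_⟩⟩
    · intro hadj
      by_contra hcon
      push_neg at hcon
      obtain ⟨hx1, hy1⟩ := hcon
      obtain ⟨_, hmem, hne1, hne2⟩ := hadj
      rcases hmem with hxH | hyH
      · have hxt : x = (t:G) := (hmemt x hxH).resolve_left hx1
        subst hxt
        rcases key y hy1 (Ne.symm hxy) with h | h
        · exact hne1 h
        · exact hne2 h
      · have hyt : y = (t:G) := (hmemt y hyH).resolve_left hy1
        subst hyt
        rcases key x hx1 hxy with h | h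
        · apply hne2
          rw [show x⁻¹*(t:G)⁻¹*x*↑t = ((t:G)⁻¹*x⁻¹*↑t*x)⁻¹ by group, h]
        · apply hne1
          rw [show x⁻¹*(t:G)⁻¹*x*↑t = ((t:G)⁻¹*x⁻¹*↑t*x)⁻¹ by group, h, inv_inv]
    · rintro (rfl | rfl)
      · refine ⟨hxy, Or.inl H.one_mem, ?_, ?_⟩
        · rw [show (1:G)⁻¹*y⁻¹*1*y = 1 by group]; exact Ne.symm hg
        · rw [show (1:G)⁻¹*y⁻¹*1*y = 1 by group]; exact fun h => hg' h.symm
      · refine ⟨hxy, Or.inr H.one_mem, ?_, ?_⟩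
        · rw [show x⁻¹*(1:G)⁻¹*x*1 = 1 by group]; exact Ne.symm hg
        · rw [show x⁻¹*(1:G)⁻¹*x*1 = 1 by group]; exact fun h => hg' h.symm
end

section
/- Let G be a finite non-abelian group, H a subgroup of G with H ≠ Z(H,G), and g ∈ K(H,G) with g ≠ 1. Then the relative g-noncommuting graph Γ^g_{H,G} is not a complete graph, i.e. there exist two distinct vertices of Γ^g_{H,G} that are not adjacent. -/
theorem stmt14 {G : Type*} [Group G] [Fintype G]
    (hG : ¬ ∀ a b : G, a * b = b * a)
    (H : Subgroup G)
    (hHZ : (H : Set G) ≠ {x : G | x ∈ H ∧ ∀ y : G, x * y = y * x})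
    (g : G) (hgK : ∃ x ∈ H, ∃ y : G, x⁻¹ * y⁻¹ * x * y = g) (hg : g ≠ 1) :
    ∃ x y : G, x ≠ y ∧ ¬ (relGraph H g).Adj x y := by
  obtain ⟨x, hx, y, hxy⟩ := hgK
  refine ⟨x, y, ?_, ?_⟩
  · rintro rfl
    apply hg
    rw [← hxy]
    group
  · rintro ⟨_, _, h1, _⟩
    exact h1 hxy
end

section
/- Let G be a finite non-abelian group, H a normal subgroup of G, and g, h ∈ G. If g and h are conjugate in G, then the relative g-noncommuting graph Γ^g_{H,G} and the relative h-noncommuting graph Γ^h_{H,G} are isomorphic as graphs. Moreover, if h = x⁻¹gx, then the map a ↦ x⁻¹ax is such an isomorphism. -/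
theorem stmt15 {G : Type*} [Group G] [Fintype G]
    (hG : ¬ ∀ a b : G, a * b = b * a)
    (H : Subgroup G) [H.Normal]
    (g h x : G) (hconj : h = x⁻¹ * g * x) :
    ∃ φ : relGraph H g ≃g relGraph H h, ∀ a : G, φ a = x⁻¹ * a * x := by
  subst hconj
  let e : G ≃ G := (MulAut.conj x⁻¹).toEquiv
  have he : ∀ a : G, e a = x⁻¹ * a * x := by
    intro a; simp [e, MulAut.conj_apply]
  have hmem : ∀ a : G, e a ∈ H ↔ a ∈ H := by
    intro a; rw [he]
    constructor
    · intro hx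
      have := Subgroup.Normal.conj_mem ‹H.Normal› _ hx x
      simpa [mul_assoc] using this
    · intro hx
      simpa [mul_assoc] using Subgroup.Normal.conj_mem ‹H.Normal› _ hx x⁻¹
  have hcomm : ∀ a b : G, (e a)⁻¹ * (e b)⁻¹ * e a * e b
      = x⁻¹ * (a⁻¹ * b⁻¹ * a * b) * x := by
    intro a b; rw [he, he]; group
  refine ⟨⟨e, ?_⟩, he⟩
  intro a b
  constructor
  · rintro ⟨hne, hm, h1, h2⟩
    refine ⟨fun hh => hne (congrArg e hh), by
      rcases hm with hm | hm
      · exact Or.inl ((hmem a).mp hm)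
      · exact Or.inr ((hmem b).mp hm), ?_, ?_⟩
    · intro hc
      apply h1
      rw [hcomm, hc]
    · intro hc
      apply h2
      rw [hcomm, hc]; group
  · rintro ⟨hne, hm, h1, h2⟩
    refine ⟨fun hh => hne (e.injective hh), by
      rcases hm with hm | hm
      · exact Or.inl ((hmem a).mpr hm)
      · exact Or.inr ((hmem b).mpr hm), ?_, ?_⟩
    · rw [hcomm]
      intro hc
      exact h1 (mul_left_cancel (mul_right_cancel hc))
    · rw [hcomm]
      intro hc
      have hc' : x⁻¹ * (a⁻¹ * b⁻¹ * a * b) * x = x⁻¹ * g⁻¹ * x := by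
        rw [hc]; group
      exact h2 (mul_left_cancel (mul_right_cancel hc'))
end

section
/- Let G be a finite non-abelian group, H a non-trivial subgroup of G with H ≠ Z(H,G), and g ∈ K(H,G) with g ≠ 1 and g² = 1. If g ∈ H, then twice the number of edges of Γ^g_{H,G} equals 2(|H||G| − N_g(H,G)) − (|H|² − N_g(H)) − |H|; if g ∈ G \ H, then twice the number of edges of Γ^g_{H,G} equals 2(|H||G| − N_g(H,G)) − |H|² − |H|. -/
theorem stmt17 {G : Type*} [Group G] [Fintype G]
    (hG : ¬ ∀ a b : G, a * b = b * a)
    (H : Subgroup G) (hH : H ≠ ⊥)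
    (hHZ : (H : Set G) ≠ {x : G | x ∈ H ∧ ∀ y : G, x * y = y * x})
    (g : G) (hgK : ∃ x ∈ H, ∃ y : G, x⁻¹ * y⁻¹ * x * y = g)
    (hg1 : g ≠ 1) (hg2 : g ^ 2 = 1) :
    (g ∈ H →
      2 * (((relGraph H g).edgeSet.ncard : ℤ))
        = 2 * ((Nat.card H : ℤ) * (Nat.card G : ℤ)
              - ({p : G × G | p.1 ∈ H ∧ p.1⁻¹ * p.2⁻¹ * p.1 * p.2 = g}.ncard : ℤ))
          - ((Nat.card H : ℤ) ^ 2
              - ({p : G × G | p.1 ∈ H ∧ p.2 ∈ H ∧ p.1⁻¹ * p.2⁻¹ * p.1 * p.2 = g}.ncard : ℤ))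
          - (Nat.card H : ℤ)) ∧
    (g ∉ H →
      2 * (((relGraph H g).edgeSet.ncard : ℤ))
        = 2 * ((Nat.card H : ℤ) * (Nat.card G : ℤ)
              - ({p : G × G | p.1 ∈ H ∧ p.1⁻¹ * p.2⁻¹ * p.1 * p.2 = g}.ncard : ℤ))
          - (Nat.card H : ℤ) ^ 2 - (Nat.card H : ℤ)) := by
  classical
  have hginv : g⁻¹ = g := by
    rw [pow_two] at hg2
    exact inv_eq_of_mul_eq_one_right hg2
  -- adjacency characterization
  have hAdj : ∀ x y : G, (relGraph H g).Adj x y ↔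
      (x ≠ y ∧ (x ∈ H ∨ y ∈ H) ∧ x⁻¹ * y⁻¹ * x * y ≠ g) := by
    intro x y
    change (x ≠ y ∧ (x ∈ H ∨ y ∈ H) ∧ x⁻¹ * y⁻¹ * x * y ≠ g ∧ x⁻¹ * y⁻¹ * x * y ≠ g⁻¹) ↔ _
    constructor
    · rintro ⟨h1, h2, h3, _⟩; exact ⟨h1, h2, h3⟩
    · rintro ⟨h1, h2, h3⟩; exact ⟨h1, h2, h3, by rw [hginv]; exact h3⟩
  set HF : Finset G := Finset.univ.filter (· ∈ H) with hHF
  set A : Finset (G × G) := Finset.univ.filter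
    (fun p => p.1 ∈ H ∧ p.1 ≠ p.2 ∧ p.1⁻¹ * p.2⁻¹ * p.1 * p.2 ≠ g) with hA
  set B : Finset (G × G) := Finset.univ.filter
    (fun p => p.2 ∈ H ∧ p.1 ≠ p.2 ∧ p.1⁻¹ * p.2⁻¹ * p.1 * p.2 ≠ g) with hB
  set Ci : Finset (G × G) := Finset.univ.filter
    (fun p => p.1 ∈ H ∧ p.2 ∈ H ∧ p.1 ≠ p.2 ∧ p.1⁻¹ * p.2⁻¹ * p.1 * p.2 ≠ g) with hCi
  set Ag : Finset (G × G) := Finset.univ.filter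
    (fun p => p.1 ∈ H ∧ p.1⁻¹ * p.2⁻¹ * p.1 * p.2 = g) with hAg
  set Cg : Finset (G × G) := Finset.univ.filter
    (fun p => p.1 ∈ H ∧ p.2 ∈ H ∧ p.1⁻¹ * p.2⁻¹ * p.1 * p.2 = g) with hCg
  have hdiag : ∀ x : G, x⁻¹ * x⁻¹ * x * x = 1 := by intro x; group
  have hswapc : ∀ x y : G, y⁻¹ * x⁻¹ * y * x = (x⁻¹ * y⁻¹ * x * y)⁻¹ := by
    intro x y; group
  -- e1 : 2E = S.card
  have e1 : 2 * (relGraph H g).edgeFinset.card = (A ∪ B).card := by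
    rw [SimpleGraph.two_mul_card_edgeFinset]
    congr 1
    ext ⟨x, y⟩
    simp only [Finset.mem_filter, Finset.mem_univ, true_and, Finset.mem_union, hAdj, hA, hB]
    tauto
  have hncardE : (relGraph H g).edgeSet.ncard = (relGraph H g).edgeFinset.card := by
    rw [← SimpleGraph.coe_edgeFinset, Set.ncard_coe_finset]
  have hAB : A ∩ B = Ci := by
    ext p
    simp only [Finset.mem_filter, Finset.mem_univ, true_and, Finset.mem_inter, hA, hB, hCi]
    tauto
  have e2 : (A ∪ B).card + Ci.card = A.card + B.card := by
    rw [← hAB]; exact Finset.card_union_add_card_inter A B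
  -- e3 : B.card = A.card by swap
  have e3 : B.card = A.card := by
    apply Finset.card_nbij' (fun p => (p.2, p.1)) (fun p => (p.2, p.1))
    · intro p hp
      simp only [Finset.mem_coe, Finset.mem_filter, Finset.mem_univ, true_and, hA, hB] at hp ⊢
      refine ⟨hp.1, Ne.symm hp.2.1, fun hc => hp.2.2 ?_⟩
      rw [hswapc] at hc
      rw [← inv_inv (p.1⁻¹ * p.2⁻¹ * p.1 * p.2), hc, hginv]
    · intro p hp
      simp only [Finset.mem_coe, Finset.mem_filter, Finset.mem_univ, true_and, hA, hB] at hp ⊢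
      refine ⟨hp.1, Ne.symm hp.2.1, fun hc => hp.2.2 ?_⟩
      rw [hswapc] at hc
      rw [← inv_inv (p.1⁻¹ * p.2⁻¹ * p.1 * p.2), hc, hginv]
    · intro p _; rfl
    · intro p _; rfl
  -- counting |H|
  have hNH : Nat.card H = HF.card := by
    rw [Nat.card_eq_fintype_card, hHF, Fintype.card_subtype]
  have hNG : Nat.card G = Fintype.card G := Nat.card_eq_fintype_card
  -- e4 : HF.card * |G| = Ag.card + HF.card + A.card
  have e4 : HF.card * Fintype.card G = Ag.card + HF.card + A.card := by
    have h1 : (Finset.univ.filter (fun p : G × G => p.1 ∈ H)) = HF ×ˢ Finset.univ := by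
      ext p; simp [hHF, Finset.mem_product]
    have h2 : Ag.card + (Finset.univ.filter
        (fun p : G × G => p.1 ∈ H ∧ p.1⁻¹ * p.2⁻¹ * p.1 * p.2 ≠ g)).card
        = HF.card * Fintype.card G := by
      rw [← Finset.card_univ (α := G), ← Finset.card_product HF Finset.univ, ← h1]
      rw [hAg]
      rw [← Finset.card_filter_add_card_filter_not
        (s := Finset.univ.filter (fun p : G × G => p.1 ∈ H))
        (fun p : G × G => p.1⁻¹ * p.2⁻¹ * p.1 * p.2 = g)]
      congr 1
      · congr 1; rw [Finset.filter_filter]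
      · congr 1; rw [Finset.filter_filter]
    have h3 : (Finset.univ.filter
        (fun p : G × G => p.1 ∈ H ∧ p.1⁻¹ * p.2⁻¹ * p.1 * p.2 ≠ g)).card
        = HF.card + A.card := by
      rw [← Finset.card_filter_add_card_filter_not
        (s := Finset.univ.filter (fun p : G × G => p.1 ∈ H ∧ p.1⁻¹ * p.2⁻¹ * p.1 * p.2 ≠ g))
        (fun p : G × G => p.1 = p.2)]
      congr 1
      · -- diagonal part has card HF.card
        apply Finset.card_nbij' (fun p => p.1) (fun x => (x, x))
        · intro p hp
          simp only [Finset.mem_coe, Finset.mem_filter, Finset.mem_univ, true_and, hHF] at hp ⊢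
          exact hp.1.1
        · intro x hx
          simp only [Finset.mem_coe, Finset.mem_filter, Finset.mem_univ, true_and, hHF] at hx
          exact Finset.mem_filter.mpr ⟨Finset.mem_filter.mpr ⟨Finset.mem_univ _,
            hx, fun h => hg1 (((hdiag x).symm.trans h).symm)⟩, rfl⟩
        · intro p hp
          simp only [Finset.mem_coe, Finset.mem_filter, Finset.mem_univ, true_and] at hp
          exact Prod.ext rfl hp.2
        · intro x _; rfl
      · rw [hA, Finset.filter_filter]
        congr 1; ext p
        try simp only [Finset.mem_filter, Finset.mem_univ, true_and]
        tauto
    omega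
  -- e5 : HF.card * HF.card = Cg.card + HF.card + Ci.card
  have e5 : HF.card * HF.card = Cg.card + HF.card + Ci.card := by
    have h1 : (Finset.univ.filter (fun p : G × G => p.1 ∈ H ∧ p.2 ∈ H)) = HF ×ˢ HF := by
      ext p; simp [hHF, Finset.mem_product]
    have h2 : Cg.card + (Finset.univ.filter
        (fun p : G × G => (p.1 ∈ H ∧ p.2 ∈ H) ∧ p.1⁻¹ * p.2⁻¹ * p.1 * p.2 ≠ g)).card
        = HF.card * HF.card := by
      rw [← Finset.card_product HF HF, ← h1]
      rw [hCg]
      rw [← Finset.card_filter_add_card_filter_not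
        (s := Finset.univ.filter (fun p : G × G => p.1 ∈ H ∧ p.2 ∈ H))
        (fun p : G × G => p.1⁻¹ * p.2⁻¹ * p.1 * p.2 = g)]
      congr 1
      · congr 1; rw [Finset.filter_filter]; congr 1
        ext p
        try simp only [Finset.mem_filter, Finset.mem_univ, true_and]
        tauto
      · congr 1; rw [Finset.filter_filter]
    have h3 : (Finset.univ.filter
        (fun p : G × G => (p.1 ∈ H ∧ p.2 ∈ H) ∧ p.1⁻¹ * p.2⁻¹ * p.1 * p.2 ≠ g)).card
        = HF.card + Ci.card := by
      rw [← Finset.card_filter_add_card_filter_not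
        (s := Finset.univ.filter
          (fun p : G × G => (p.1 ∈ H ∧ p.2 ∈ H) ∧ p.1⁻¹ * p.2⁻¹ * p.1 * p.2 ≠ g))
        (fun p : G × G => p.1 = p.2)]
      congr 1
      · apply Finset.card_nbij' (fun p => p.1) (fun x => (x, x))
        · intro p hp
          simp only [Finset.mem_coe, Finset.mem_filter, Finset.mem_univ, true_and, hHF] at hp ⊢
          exact hp.1.1.1
        · intro x hx
          simp only [Finset.mem_coe, Finset.mem_filter, Finset.mem_univ, true_and, hHF] at hx
          exact Finset.mem_filter.mpr ⟨Finset.mem_filter.mpr ⟨Finset.mem_univ _,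
            ⟨hx, hx⟩, fun h => hg1 (((hdiag x).symm.trans h).symm)⟩, rfl⟩
        · intro p hp
          simp only [Finset.mem_coe, Finset.mem_filter, Finset.mem_univ, true_and] at hp
          exact Prod.ext rfl hp.2
        · intro x _; rfl
      · rw [hCi, Finset.filter_filter]
        congr 1; ext p
        try simp only [Finset.mem_filter, Finset.mem_univ, true_and]
        tauto
    omega
  -- ncards of the sets in the statement
  have hsetAg : {p : G × G | p.1 ∈ H ∧ p.1⁻¹ * p.2⁻¹ * p.1 * p.2 = g}.ncard = Ag.card := by
    have : {p : G × G | p.1 ∈ H ∧ p.1⁻¹ * p.2⁻¹ * p.1 * p.2 = g} = ↑Ag := by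
      ext p; simp [hAg]
    rw [this, Set.ncard_coe_finset]
  have hsetCg : {p : G × G | p.1 ∈ H ∧ p.2 ∈ H ∧ p.1⁻¹ * p.2⁻¹ * p.1 * p.2 = g}.ncard
      = Cg.card := by
    have : {p : G × G | p.1 ∈ H ∧ p.2 ∈ H ∧ p.1⁻¹ * p.2⁻¹ * p.1 * p.2 = g} = ↑Cg := by
      ext p; simp [hCg]
    rw [this, Set.ncard_coe_finset]
  constructor
  · intro _
    rw [hncardE, hNH, hNG, hsetAg, hsetCg]
    have h2E : 2 * (relGraph H g).edgeFinset.card + Ci.card = 2 * A.card := by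
      omega
    push_cast
    have e4' := e4
    have e5' := e5
    zify at h2E e4' e5'
    linarith
  · intro hgH
    rw [hncardE, hNH, hNG, hsetAg]
    have hCg0 : Cg.card = 0 := by
      rw [Finset.card_eq_zero, hCg]
      rw [Finset.filter_eq_empty_iff]
      rintro p _ ⟨h1, h2, h3⟩
      exact hgH (h3 ▸ H.mul_mem (H.mul_mem (H.mul_mem (H.inv_mem h1) (H.inv_mem h2)) h1) h2)
    have h2E : 2 * (relGraph H g).edgeFinset.card + Ci.card = 2 * A.card := by
      omega
    push_cast
    have e4' := e4
    have e5' := e5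
    rw [hCg0] at e5'
    zify at h2E e4' e5'
    linarith
end

section
/- Let G be a finite non-abelian group, H a non-trivial subgroup of G with H ≠ Z(H,G), and g ∈ K(H,G) with g ≠ 1 and g² ≠ 1. If g ∈ H, then twice the number of edges of Γ^g_{H,G} equals 2(|H||G| − N_g(H,G) − N_{g⁻¹}(H,G)) − (|H|² − N_g(H) − N_{g⁻¹}(H)) − |H|; if g ∈ G \ H, then twice the number of edges of Γ^g_{H,G} equals 2(|H||G| − N_g(H,G) − N_{g⁻¹}(H,G)) − |H|² − |H|. -/
open Finset

theorem aux18 {G : Type*} [Group G] [Fintype G]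
    (H : Subgroup G) (g : G) (hg1 : g ≠ 1) (hg2 : g ^ 2 ≠ 1) :
      2 * (((relGraph H g).edgeSet.ncard : ℤ))
        = 2 * ((Nat.card H : ℤ) * (Nat.card G : ℤ)
              - ({p : G × G | p.1 ∈ H ∧ p.1⁻¹ * p.2⁻¹ * p.1 * p.2 = g}.ncard : ℤ)
              - ({p : G × G | p.1 ∈ H ∧ p.1⁻¹ * p.2⁻¹ * p.1 * p.2 = g⁻¹}.ncard : ℤ))
          - ((Nat.card H : ℤ) ^ 2
              - ({p : G × G | p.1 ∈ H ∧ p.2 ∈ H ∧ p.1⁻¹ * p.2⁻¹ * p.1 * p.2 = g}.ncard : ℤ)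
              - ({p : G × G | p.1 ∈ H ∧ p.2 ∈ H ∧ p.1⁻¹ * p.2⁻¹ * p.1 * p.2 = g⁻¹}.ncard : ℤ))
          - (Nat.card H : ℤ) := by
  classical
  have hgi1 : g⁻¹ ≠ 1 := fun h => hg1 (by rw [← inv_inv g, h, inv_one])
  set c : G × G → G := fun p => p.1⁻¹ * p.2⁻¹ * p.1 * p.2 with hc
  set Q : G × G → Prop := fun p => c p ≠ g ∧ c p ≠ g⁻¹ with hQ
  set S : Finset (G × G) :=
    univ.filter (fun p => p.1 ≠ p.2 ∧ (p.1 ∈ H ∨ p.2 ∈ H) ∧ Q p) with hS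
  set A : Finset (G × G) := univ.filter (fun p => (p.1 ∈ H ∨ p.2 ∈ H) ∧ Q p) with hA
  set B1 : Finset (G × G) := univ.filter (fun p => p.1 ∈ H ∧ Q p) with hB1
  set B2 : Finset (G × G) := univ.filter (fun p => p.2 ∈ H ∧ Q p) with hB2
  set C : Finset (G × G) := univ.filter (fun p => p.1 ∈ H ∧ p.2 ∈ H ∧ Q p) with hC
  set Ng : Finset (G × G) := univ.filter (fun p => p.1 ∈ H ∧ c p = g) with hNg
  set Ngi : Finset (G × G) := univ.filter (fun p => p.1 ∈ H ∧ c p = g⁻¹) with hNgi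
  set Mg : Finset (G × G) := univ.filter (fun p => p.1 ∈ H ∧ p.2 ∈ H ∧ c p = g) with hMg
  set Mgi : Finset (G × G) := univ.filter (fun p => p.1 ∈ H ∧ p.2 ∈ H ∧ c p = g⁻¹) with hMgi
  set hFH : Finset G := univ.filter (fun x => x ∈ H) with hhH
  -- edge count
  have h1 : 2 * (relGraph H g).edgeSet.ncard = S.card := by
    rw [← SimpleGraph.coe_edgeFinset, Set.ncard_coe_finset, (relGraph H g).two_mul_card_edgeFinset]
    congr 1
    ext p
    simp only [mem_filter, mem_univ, true_and, hS]
    exact Iff.rfl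
  -- S + |H| = A
  have h2 : S.card + hFH.card = A.card := by
    have key := Finset.card_filter_add_card_filter_not
      (s := A) (p := fun p => p.1 ≠ p.2)
    have eS : A.filter (fun p => p.1 ≠ p.2) = S := by
      ext p
      simp only [hA, hS, mem_filter, mem_univ, true_and]
      tauto
    have eD : A.filter (fun p => ¬ p.1 ≠ p.2) = hFH.image (fun x => (x, x)) := by
      ext p
      simp only [hA, hhH, mem_filter, mem_univ, true_and, mem_image, not_not]
      constructor
      · rintro ⟨⟨hm, _⟩, heq⟩
        refine ⟨p.1, ?_, Prod.ext rfl heq⟩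
        rcases hm with hm | hm
        · exact hm
        · rwa [heq]
      · rintro ⟨x, hx, rfl⟩
        refine ⟨⟨Or.inl hx, ?_, ?_⟩, rfl⟩ <;>
          simp only [hQ, hc] <;>
          simp [hg1.symm, hgi1.symm, mul_assoc]
    have eCard : (hFH.image (fun x => (x, x))).card = hFH.card :=
      Finset.card_image_of_injective _ (fun a b h => (Prod.mk.injEq _ _ _ _ ▸ h : _ ∧ _).1)
    rw [eS, eD, eCard] at key
    exact key
  -- A + C = B1 + B2
  have h3 : A.card + C.card = B1.card + B2.card := by
    rw [hA, hB1, hB2, hC]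
    have e1 : (univ.filter (fun p : G × G => (p.1 ∈ H ∨ p.2 ∈ H) ∧ Q p))
        = (univ.filter (fun p => p.1 ∈ H ∧ Q p)) ∪ (univ.filter (fun p => p.2 ∈ H ∧ Q p)) := by
      rw [← Finset.filter_or]; apply Finset.filter_congr; intro p _; tauto
    have e2 : (univ.filter (fun p : G × G => p.1 ∈ H ∧ p.2 ∈ H ∧ Q p))
        = (univ.filter (fun p => p.1 ∈ H ∧ Q p)) ∩ (univ.filter (fun p => p.2 ∈ H ∧ Q p)) := by
      rw [← Finset.filter_and]; apply Finset.filter_congr; intro p _; tauto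
    rw [e1, e2]
    exact Finset.card_union_add_card_inter _ _
  -- B2 = B1
  have h4 : B2.card = B1.card := by
    rw [hB1, hB2]
    apply Finset.card_bij' (fun p _ => Prod.swap p) (fun p _ => Prod.swap p)
    · rintro p hp
      simp only [mem_filter, mem_univ, true_and, hQ, hc, Prod.fst_swap, Prod.snd_swap] at hp ⊢
      obtain ⟨hm, hq1, hq2⟩ := hp
      have key : p.2⁻¹ * p.1⁻¹ * p.2 * p.1 = (p.1⁻¹ * p.2⁻¹ * p.1 * p.2)⁻¹ := by group
      refine ⟨hm, fun h => hq2 ?_, fun h => hq1 ?_⟩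
      · rw [← inv_inv (p.1⁻¹ * p.2⁻¹ * p.1 * p.2), ← key, h]
      · rw [← inv_inv (p.1⁻¹ * p.2⁻¹ * p.1 * p.2), ← key, h, inv_inv]
    · rintro p hp
      simp only [mem_filter, mem_univ, true_and, hQ, hc, Prod.fst_swap, Prod.snd_swap] at hp ⊢
      obtain ⟨hm, hq1, hq2⟩ := hp
      have key : p.2⁻¹ * p.1⁻¹ * p.2 * p.1 = (p.1⁻¹ * p.2⁻¹ * p.1 * p.2)⁻¹ := by group
      refine ⟨hm, fun h => hq2 ?_, fun h => hq1 ?_⟩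
      · rw [← inv_inv (p.1⁻¹ * p.2⁻¹ * p.1 * p.2), ← key, h]
      · rw [← inv_inv (p.1⁻¹ * p.2⁻¹ * p.1 * p.2), ← key, h, inv_inv]
    · intro p _; exact Prod.swap_swap p
    · intro p _; exact Prod.swap_swap p
  -- B1 + Ng + Ngi = |H| * |G|
  have h5 : B1.card + Ng.card + Ngi.card = hFH.card * Fintype.card G := by
    have split1 := Finset.card_filter_add_card_filter_not
      (s := univ.filter (fun p : G × G => p.1 ∈ H)) (p := fun p => c p = g)
    have split2 := Finset.card_filter_add_card_filter_not
      (s := (univ.filter (fun p : G × G => p.1 ∈ H)).filter (fun a => ¬ c a = g))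
      (p := fun p => c p = g⁻¹)
    have eB1 : ((univ.filter (fun p : G × G => p.1 ∈ H)).filter (fun a => ¬ c a = g)).filter
        (fun a => ¬ c a = g⁻¹) = B1 := by
      rw [hB1, Finset.filter_filter, Finset.filter_filter]
    have eNg : (univ.filter (fun p : G × G => p.1 ∈ H)).filter (fun p => c p = g) = Ng := by
      rw [hNg, Finset.filter_filter]
    have eNgi : ((univ.filter (fun p : G × G => p.1 ∈ H)).filter (fun a => ¬ c a = g)).filter
        (fun p => c p = g⁻¹) = Ngi := by
      rw [hNgi, Finset.filter_filter, Finset.filter_filter]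
      apply Finset.filter_congr
      intro p _
      constructor
      · rintro ⟨hm, _, hq⟩; exact ⟨hm, hq⟩
      · rintro ⟨hm, hq⟩
        refine ⟨hm, fun h => ?_, hq⟩
        apply hg2
        rw [pow_two]
        nth_rewrite 1 [← h]
        rw [hq, inv_mul_cancel]
    have ecard : (univ.filter (fun p : G × G => p.1 ∈ H)).card = hFH.card * Fintype.card G := by
      have e : (univ.filter (fun p : G × G => p.1 ∈ H)) = hFH ×ˢ univ := by
        ext p; simp [hhH]
      rw [e, Finset.card_product, Finset.card_univ]
    rw [eNg, ecard] at split1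
    rw [eNgi, eB1] at split2
    omega
  -- C + Mg + Mgi = |H| ^ 2
  have h7 : C.card + Mg.card + Mgi.card = hFH.card ^ 2 := by
    have split1 := Finset.card_filter_add_card_filter_not
      (s := univ.filter (fun p : G × G => p.1 ∈ H ∧ p.2 ∈ H)) (p := fun p => c p = g)
    have split2 := Finset.card_filter_add_card_filter_not
      (s := (univ.filter (fun p : G × G => p.1 ∈ H ∧ p.2 ∈ H)).filter (fun a => ¬ c a = g))
      (p := fun p => c p = g⁻¹)
    have eC : ((univ.filter (fun p : G × G => p.1 ∈ H ∧ p.2 ∈ H)).filter (fun a => ¬ c a = g)).filter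
        (fun a => ¬ c a = g⁻¹) = C := by
      rw [hC, Finset.filter_filter, Finset.filter_filter]
      apply Finset.filter_congr; intro p _
      simp only [hQ]; tauto
    have eMg : (univ.filter (fun p : G × G => p.1 ∈ H ∧ p.2 ∈ H)).filter (fun p => c p = g)
        = Mg := by
      rw [hMg, Finset.filter_filter]
      apply Finset.filter_congr; intro p _; tauto
    have eMgi : ((univ.filter (fun p : G × G => p.1 ∈ H ∧ p.2 ∈ H)).filter
        (fun a => ¬ c a = g)).filter (fun p => c p = g⁻¹) = Mgi := by
      rw [hMgi, Finset.filter_filter, Finset.filter_filter]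
      apply Finset.filter_congr
      intro p _
      constructor
      · rintro ⟨hm, _, hq⟩; exact ⟨hm.1, hm.2, hq⟩
      · rintro ⟨hm1, hm2, hq⟩
        refine ⟨⟨hm1, hm2⟩, fun h => ?_, hq⟩
        apply hg2
        rw [pow_two]
        nth_rewrite 1 [← h]
        rw [hq, inv_mul_cancel]
    have ecard : (univ.filter (fun p : G × G => p.1 ∈ H ∧ p.2 ∈ H)).card = hFH.card ^ 2 := by
      have e : (univ.filter (fun p : G × G => p.1 ∈ H ∧ p.2 ∈ H)) = hFH ×ˢ hFH := by
        ext p; simp [hhH]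
      rw [e, Finset.card_product, pow_two]
    rw [eMg, ecard] at split1
    rw [eMgi, eC] at split2
    omega
  have hcardH : Nat.card H = hFH.card := by
    rw [Nat.card_eq_fintype_card, hhH, ← Fintype.card_subtype]
  have hcardG : Nat.card G = Fintype.card G := Nat.card_eq_fintype_card
  have conv : ∀ p : G × G → Prop, ∀ _ : DecidablePred p,
      ({q : G × G | p q}.ncard) = (univ.filter p).card := by
    intro p _
    rw [Set.ncard_eq_toFinset_card', Set.toFinset_setOf]
  have cg : ({p : G × G | p.1 ∈ H ∧ p.1⁻¹ * p.2⁻¹ * p.1 * p.2 = g}.ncard) = Ng.card := by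
    rw [hNg]; exact conv _ _
  have cgi : ({p : G × G | p.1 ∈ H ∧ p.1⁻¹ * p.2⁻¹ * p.1 * p.2 = g⁻¹}.ncard) = Ngi.card := by
    rw [hNgi]; exact conv _ _
  have cmg : ({p : G × G | p.1 ∈ H ∧ p.2 ∈ H ∧ p.1⁻¹ * p.2⁻¹ * p.1 * p.2 = g}.ncard)
      = Mg.card := by
    rw [hMg]; exact conv _ _
  have cmgi : ({p : G × G | p.1 ∈ H ∧ p.2 ∈ H ∧ p.1⁻¹ * p.2⁻¹ * p.1 * p.2 = g⁻¹}.ncard)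
      = Mgi.card := by
    rw [hMgi]; exact conv _ _
  have h1' : (2 : ℤ) * ((relGraph H g).edgeSet.ncard : ℤ) = (S.card : ℤ) := by
    exact_mod_cast h1
  rw [cg, cgi, cmg, cmgi, hcardH, hcardG, h1']
  have h2' : (S.card : ℤ) + hFH.card = A.card := by exact_mod_cast h2
  have h3' : (A.card : ℤ) + C.card = B1.card + B2.card := by exact_mod_cast h3
  have h4' : (B2.card : ℤ) = B1.card := by exact_mod_cast h4
  have h5' : (B1.card : ℤ) + Ng.card + Ngi.card = (hFH.card : ℤ) * (Fintype.card G : ℤ) := by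
    exact_mod_cast h5
  have h7' : (C.card : ℤ) + Mg.card + Mgi.card = (hFH.card : ℤ) ^ 2 := by exact_mod_cast h7
  linarith

theorem stmt18 {G : Type*} [Group G] [Fintype G]
    (hG : ¬ ∀ a b : G, a * b = b * a)
    (H : Subgroup G) (hH : H ≠ ⊥)
    (hHZ : (H : Set G) ≠ {x : G | x ∈ H ∧ ∀ y : G, x * y = y * x})
    (g : G) (hgK : ∃ x ∈ H, ∃ y : G, x⁻¹ * y⁻¹ * x * y = g)
    (hg1 : g ≠ 1) (hg2 : g ^ 2 ≠ 1) :
    (g ∈ H →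
      2 * (((relGraph H g).edgeSet.ncard : ℤ))
        = 2 * ((Nat.card H : ℤ) * (Nat.card G : ℤ)
              - ({p : G × G | p.1 ∈ H ∧ p.1⁻¹ * p.2⁻¹ * p.1 * p.2 = g}.ncard : ℤ)
              - ({p : G × G | p.1 ∈ H ∧ p.1⁻¹ * p.2⁻¹ * p.1 * p.2 = g⁻¹}.ncard : ℤ))
          - ((Nat.card H : ℤ) ^ 2
              - ({p : G × G | p.1 ∈ H ∧ p.2 ∈ H ∧ p.1⁻¹ * p.2⁻¹ * p.1 * p.2 = g}.ncard : ℤ)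
              - ({p : G × G | p.1 ∈ H ∧ p.2 ∈ H ∧ p.1⁻¹ * p.2⁻¹ * p.1 * p.2 = g⁻¹}.ncard : ℤ))
          - (Nat.card H : ℤ)) ∧
    (g ∉ H →
      2 * (((relGraph H g).edgeSet.ncard : ℤ))
        = 2 * ((Nat.card H : ℤ) * (Nat.card G : ℤ)
              - ({p : G × G | p.1 ∈ H ∧ p.1⁻¹ * p.2⁻¹ * p.1 * p.2 = g}.ncard : ℤ)
              - ({p : G × G | p.1 ∈ H ∧ p.1⁻¹ * p.2⁻¹ * p.1 * p.2 = g⁻¹}.ncard : ℤ))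
          - (Nat.card H : ℤ) ^ 2 - (Nat.card H : ℤ)) := by
  have main := aux18 H g hg1 hg2
  refine ⟨fun _ => main, fun hgH => ?_⟩
  have e1 : {p : G × G | p.1 ∈ H ∧ p.2 ∈ H ∧ p.1⁻¹ * p.2⁻¹ * p.1 * p.2 = g} = ∅ := by
    ext p
    simp only [Set.mem_setOf_eq, Set.mem_empty_iff_false, iff_false]
    rintro ⟨h1', h2', h3'⟩
    exact hgH (h3' ▸ mul_mem (mul_mem (mul_mem (inv_mem h1') (inv_mem h2')) h1') h2')
  have e2 : {p : G × G | p.1 ∈ H ∧ p.2 ∈ H ∧ p.1⁻¹ * p.2⁻¹ * p.1 * p.2 = g⁻¹} = ∅ := by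
    ext p
    simp only [Set.mem_setOf_eq, Set.mem_empty_iff_false, iff_false]
    rintro ⟨h1', h2', h3'⟩
    apply hgH
    rw [← inv_inv g, ← h3']
    exact inv_mem (mul_mem (mul_mem (mul_mem (inv_mem h1') (inv_mem h2')) h1') h2')
  rw [e1, e2] at main
  simp only [Set.ncard_empty, Nat.cast_zero, sub_zero] at main
  linarith [main]
end
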